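/- arXiv:1305.2444 — 9 statements merged into one kernel-verified Lean document; each statement's English description precedes it below -/
import Mathlib

section
/- Let x(t) = a₀ + t·a₁ + t²·a₂ and y(t) = b₀ + t·b₁ + t²·b₂ be real quadratic polynomials in t. Then the parametrized curve C = {(x(t), y(t)) : t ∈ ℝ} ⊆ ℝ² is homogenization-convex, i.e., the closure of {τ·p : τ ≥ 0, p ∈ C} is convex. -/
private lemma exists_kernel (α β γ α' β' γ' : ℝ) :
    ∃ k₁ k₂ k₃ : ℝ, (k₁ ≠ 0 ∨ k₂ ≠ 0 ∨ k₃ ≠ 0) ∧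
      α*k₁ + β*k₂ + γ*k₃ = 0 ∧ α'*k₁ + β'*k₂ + γ'*k₃ = 0 := by
  by_cases h1 : β*γ' - γ*β' ≠ 0 ∨ γ*α' - α*γ' ≠ 0 ∨ α*β' - β*α' ≠ 0
  · exact ⟨β*γ' - γ*β', γ*α' - α*γ', α*β' - β*α', h1, by ring, by ring⟩
  push_neg at h1
  obtain ⟨e1, e2, e3⟩ := h1
  by_cases h2 : α ≠ 0 ∨ β ≠ 0
  · refine ⟨-β, α, 0, ?_, by ring, by linear_combination e3⟩
    rcases h2 with h | h
    · exact Or.inr (Or.inl h)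
    · exact Or.inl (neg_ne_zero.mpr h)
  push_neg at h2
  obtain ⟨hα, hβ⟩ := h2
  by_cases hγ : γ ≠ 0
  · refine ⟨0, -γ, 0, Or.inr (Or.inl (neg_ne_zero.mpr hγ)), by linear_combination -γ*hβ, ?_⟩
    linear_combination e1 - γ'*hβ
  push_neg at hγ
  by_cases h3 : α' ≠ 0 ∨ β' ≠ 0
  · refine ⟨-β', α', 0, ?_, by rw [hα, hβ]; ring, by ring⟩
    rcases h3 with h | h
    · exact Or.inr (Or.inl h)
    · exact Or.inl (neg_ne_zero.mpr h)
  push_neg at h3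
  exact ⟨1, 0, 0, Or.inl one_ne_zero, by rw [hα]; ring, by rw [h3.1]; ring⟩

private lemma add_mem_rangeQ (a₀ a₁ a₂ b₀ b₁ b₂ u₁ v₁ u₂ v₂ : ℝ) :
    ∃ u v : ℝ,
      a₀*u^2 + a₁*(u*v) + a₂*v^2
        = (a₀*u₁^2 + a₁*(u₁*v₁) + a₂*v₁^2) + (a₀*u₂^2 + a₁*(u₂*v₂) + a₂*v₂^2) ∧
      b₀*u^2 + b₁*(u*v) + b₂*v^2
        = (b₀*u₁^2 + b₁*(u₁*v₁) + b₂*v₁^2) + (b₀*u₂^2 + b₁*(u₂*v₂) + b₂*v₂^2) := by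
  obtain ⟨k₁, k₂, k₃, hk, hkA, hkB⟩ :=
    exists_kernel ((a₀-a₂)/2) (a₁/2) ((a₀+a₂)/2) ((b₀-b₂)/2) (b₁/2) ((b₀+b₂)/2)
  set z₁ : ℂ := (u₁:ℂ) + (v₁:ℂ)*Complex.I with hz₁
  set z₂ : ℂ := (u₂:ℂ) + (v₂:ℂ)*Complex.I with hz₂
  set s : ℂ := z₁^2 + z₂^2 with hs
  set m : ℝ := u₁^2 + v₁^2 + u₂^2 + v₂^2 with hm
  set kc : ℂ := (k₁:ℂ) + (k₂:ℂ)*Complex.I with hkc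
  have habs1 : ‖z₁‖ ^ 2 = u₁^2 + v₁^2 := by
    rw [Complex.sq_norm, hz₁, Complex.normSq_apply]
    simp
    ring
  have habs2 : ‖z₂‖ ^ 2 = u₂^2 + v₂^2 := by
    rw [Complex.sq_norm, hz₂, Complex.normSq_apply]
    simp
    ring
  have habs_s : ‖s‖ ≤ m := by
    calc ‖s‖ ≤ ‖z₁^2‖ + ‖z₂^2‖ := norm_add_le _ _
    _ = m := by rw [norm_pow, norm_pow, habs1, habs2, hm]; ring
  have hm0 : 0 ≤ m := le_trans (norm_nonneg s) habs_s
  set f : ℝ → ℝ := fun t => m + t*k₃ - ‖s + (t:ℂ)*kc‖ with hf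
  have hfc : Continuous f := by
    apply Continuous.sub
    · fun_prop
    · exact continuous_norm.comp (by fun_prop)
  have hf0 : 0 ≤ f 0 := by simp [hf]; linarith
  obtain ⟨t₀, ht₀⟩ : ∃ t₀, f t₀ ≤ 0 := by
    by_cases hk3 : k₃ = 0
    · have hkc0 : kc ≠ 0 := by
        rcases hk with h | h | h
        · simp [hkc, Complex.ext_iff]; intro h'; exact absurd h' h
        · simp [hkc, Complex.ext_iff]; intro _; exact h
        · exact absurd hk3 h
      have habskc : 0 < ‖kc‖ := norm_pos_iff.mpr hkc0
      refine ⟨(m + ‖s‖)/‖kc‖, ?_⟩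
      have h1 : ‖(((m + ‖s‖)/‖kc‖ : ℝ) : ℂ) * kc‖
          ≤ ‖s + (((m + ‖s‖)/‖kc‖ : ℝ) : ℂ) * kc‖ + ‖s‖ := by
        have := norm_add_le (s + (((m + ‖s‖)/‖kc‖ : ℝ) : ℂ) * kc) (-s)
        simpa using this
      have h2 : ‖(((m + ‖s‖)/‖kc‖ : ℝ) : ℂ) * kc‖
          = m + ‖s‖ := by
        rw [norm_mul, Complex.norm_real, Real.norm_eq_abs, abs_of_nonneg (by positivity)]
        field_simp
      rw [hf]
      simp only [hk3, mul_zero, add_zero]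
      linarith [h1, h2]
    · refine ⟨-m/k₃, ?_⟩
      have : m + (-m/k₃)*k₃ = 0 := by field_simp; ring
      rw [hf]
      simp only [this]
      simp [norm_nonneg]
  obtain ⟨t, -, hft⟩ := intermediate_value_uIcc (a := 0) (b := t₀) (f := f) hfc.continuousOn
    (Set.mem_uIcc.mpr (Or.inr ⟨ht₀, hf0⟩))
  have habsc : ‖s + (t:ℂ)*kc‖ = m + t*k₃ := by
    rw [hf] at hft; dsimp at hft; linarith
  obtain ⟨w, hw⟩ := IsAlgClosed.exists_pow_nat_eq (k := ℂ) (s + (t:ℂ)*kc) (n := 2) (by norm_num)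
  have E1 : w.re^2 - w.im^2 = (u₁^2 - v₁^2 + u₂^2 - v₂^2) + t*k₁ := by
      have h := congrArg Complex.re hw
      simp [hs, hz₁, hz₂, hkc, pow_two, Complex.mul_re, Complex.add_re, Complex.mul_im,
        Complex.add_im] at h
      linear_combination h
  have E2 : 2*(w.re*w.im) = (2*(u₁*v₁) + 2*(u₂*v₂)) + t*k₂ := by
      have h := congrArg Complex.im hw
      simp [hs, hz₁, hz₂, hkc, pow_two, Complex.mul_re, Complex.add_re, Complex.mul_im,
        Complex.add_im] at h
      linear_combination h
  have E3 : w.re^2 + w.im^2 = (u₁^2 + v₁^2 + u₂^2 + v₂^2) + t*k₃ := by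
      have h : Complex.normSq w = ‖w^2‖ := by
        rw [norm_pow, Complex.sq_norm]
      rw [hw, habsc, Complex.normSq_apply] at h
      rw [hm] at h
      linear_combination h
  refine ⟨w.re, w.im, ?_, ?_⟩
  · linear_combination ((a₀-a₂)/2)*E1 + (a₁/2)*E2 + ((a₀+a₂)/2)*E3 + t*hkA
  · linear_combination ((b₀-b₂)/2)*E1 + (b₁/2)*E2 + ((b₀+b₂)/2)*E3 + t*hkB

/-- The homogeneous hull of a set: `{τ • x : τ ≥ 0, x ∈ C}`. -/
def homHull (C : Set (ℝ × ℝ)) : Set (ℝ × ℝ) :=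
  {y | ∃ τ : ℝ, 0 ≤ τ ∧ ∃ x ∈ C, y = τ • x}

/-- A curve in `ℝ²` parametrized by two quadratic polynomials is
homogenization-convex. -/
theorem quadratic_curve_homogenizationConvex (a₀ a₁ a₂ b₀ b₁ b₂ : ℝ) :
    Convex ℝ (closure (homHull
      {p : ℝ × ℝ | ∃ t : ℝ, p = (a₀ + t * a₁ + t ^ 2 * a₂, b₀ + t * b₁ + t ^ 2 * b₂)})) := by
  set C : Set (ℝ × ℝ) :=
    {p : ℝ × ℝ | ∃ t : ℝ, p = (a₀ + t * a₁ + t ^ 2 * a₂, b₀ + t * b₁ + t ^ 2 * b₂)} with hC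
  set S : Set (ℝ × ℝ) :=
    {p : ℝ × ℝ | ∃ u v : ℝ,
      p = (a₀*u^2 + a₁*(u*v) + a₂*v^2, b₀*u^2 + b₁*(u*v) + b₂*v^2)} with hSdef
  have h1 : homHull C ⊆ S := by
    rintro p ⟨τ, hτ, q, ⟨t, rfl⟩, rfl⟩
    refine ⟨Real.sqrt τ, Real.sqrt τ * t, ?_⟩
    have h : Real.sqrt τ ^ 2 = τ := Real.sq_sqrt hτ
    simp only [Prod.smul_mk, smul_eq_mul, Prod.mk.injEq]
    constructor
    · linear_combination (-(a₀ + t * a₁ + t ^ 2 * a₂)) * h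
    · linear_combination (-(b₀ + t * b₁ + t ^ 2 * b₂)) * h
  have hmem : ∀ u v : ℝ, u ≠ 0 →
      ((a₀*u^2 + a₁*(u*v) + a₂*v^2, b₀*u^2 + b₁*(u*v) + b₂*v^2) : ℝ × ℝ) ∈ homHull C := by
    intro u v hu
    refine ⟨u^2, sq_nonneg u, _, ⟨v/u, rfl⟩, ?_⟩
    simp only [Prod.smul_mk, smul_eq_mul, Prod.mk.injEq]
    constructor <;> · field_simp
  have h2 : S ⊆ closure (homHull C) := by
    rintro p ⟨u, v, rfl⟩
    by_cases hu : u = 0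
    · subst hu
      have hcont : Continuous (fun x : ℝ =>
          ((a₀*x^2 + a₁*(x*v) + a₂*v^2, b₀*x^2 + b₁*(x*v) + b₂*v^2) : ℝ × ℝ)) := by
        fun_prop
      have ht : Filter.Tendsto (fun x : ℝ =>
          ((a₀*x^2 + a₁*(x*v) + a₂*v^2, b₀*x^2 + b₁*(x*v) + b₂*v^2) : ℝ × ℝ))
          (nhdsWithin 0 {(0:ℝ)}ᶜ)
          (nhds ((a₀*0^2 + a₁*(0*v) + a₂*v^2, b₀*0^2 + b₁*(0*v) + b₂*v^2) : ℝ × ℝ)) :=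
        Filter.Tendsto.mono_left (hcont.tendsto 0) nhdsWithin_le_nhds
      exact mem_closure_of_tendsto ht
        (eventually_mem_nhdsWithin.mono (fun x hx => hmem x v hx))
    · exact subset_closure (hmem u v hu)
  have hS : closure (homHull C) = closure S :=
    subset_antisymm (closure_mono h1) (closure_minimal h2 isClosed_closure)
  have hsmul : ∀ lam : ℝ, 0 ≤ lam → ∀ p ∈ S, lam • p ∈ S := by
    rintro lam hlam p ⟨u, v, rfl⟩
    refine ⟨Real.sqrt lam * u, Real.sqrt lam * v, ?_⟩
    have h : Real.sqrt lam ^ 2 = lam := Real.sq_sqrt hlam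
    simp only [Prod.smul_mk, smul_eq_mul, Prod.mk.injEq]
    constructor
    · linear_combination (-(a₀*u^2 + a₁*(u*v) + a₂*v^2)) * h
    · linear_combination (-(b₀*u^2 + b₁*(u*v) + b₂*v^2)) * h
  have hadd : ∀ p ∈ S, ∀ q ∈ S, p + q ∈ S := by
    rintro p ⟨u₁, v₁, rfl⟩ q ⟨u₂, v₂, rfl⟩
    obtain ⟨u, v, hA, hB⟩ := add_mem_rangeQ a₀ a₁ a₂ b₀ b₁ b₂ u₁ v₁ u₂ v₂
    exact ⟨u, v, by simp only [Prod.mk_add_mk, Prod.mk.injEq]; exact ⟨hA.symm, hB.symm⟩⟩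
  rw [hS]
  intro x hx y hy lam mu hlam hmu hsum
  exact map_mem_closure₂ (f := fun p q : ℝ × ℝ => lam • p + mu • q)
    (by fun_prop) hx hy
    (fun p hp q hq => hadd _ (hsmul lam hlam p hp) _ (hsmul mu hmu q hq))
end

section
/- Let K ⊆ ℝ² be a closed convex set whose complement contains 0 in its interior (i.e., 0 lies in the interior of ℝ² \ K). Then the boundary C = ∂K is homogenization-convex: the closure of {τx : τ ≥ 0, x ∈ ∂K} is convex. -/
lemma homHull_convex {C : Set (ℝ × ℝ)} (hC : Convex ℝ C) : Convex ℝ (homHull C) := by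
  rintro y₁ ⟨τ₁, hτ₁, x₁, hx₁, rfl⟩ y₂ ⟨τ₂, hτ₂, x₂, hx₂, rfl⟩ a b ha hb hab
  have haτ : 0 ≤ a * τ₁ := mul_nonneg ha hτ₁
  have hbτ : 0 ≤ b * τ₂ := mul_nonneg hb hτ₂
  set s := a * τ₁ + b * τ₂ with hs
  rcases eq_or_lt_of_le (add_nonneg haτ hbτ) with hs0 | hs0
  · have h1 : a * τ₁ = 0 := by linarith [haτ, hbτ]
    have h2 : b * τ₂ = 0 := by linarith [haτ, hbτ]
    refine ⟨0, le_refl 0, x₁, hx₁, ?_⟩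
    simp [smul_smul, h1, h2]
  · refine ⟨s, le_of_lt hs0, (a * τ₁ / s) • x₁ + (b * τ₂ / s) • x₂,
      hC hx₁ hx₂ (div_nonneg haτ hs0.le) (div_nonneg hbτ hs0.le) (by field_simp; exact div_self (ne_of_gt hs0)), ?_⟩
    rw [smul_add, smul_smul, smul_smul, smul_smul, smul_smul]
    have hsne : s ≠ 0 := ne_of_gt hs0
    rw [mul_div_cancel₀ _ hsne, mul_div_cancel₀ _ hsne]

lemma crossing {K : Set (ℝ × ℝ)} (hKcl : IsClosed K) (h0K : (0 : ℝ × ℝ) ∉ K)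
    {x : ℝ × ℝ} (hx : x ∈ K) : ∃ t : ℝ, 0 < t ∧ t ≤ 1 ∧ t • x ∈ frontier K := by
  set S : Set ℝ := {t : ℝ | t ∈ Set.Icc (0:ℝ) 1 ∧ t • x ∈ K} with hS
  have hcont : Continuous (fun t : ℝ => t • x) := continuous_id.smul continuous_const
  have hScl : IsClosed S := (isClosed_Icc.inter (hKcl.preimage hcont))
  have hSne : S.Nonempty := ⟨1, ⟨le_of_lt one_pos, le_refl 1⟩, by simpa using hx⟩
  have hSbdd : BddBelow S := ⟨0, fun t ht => ht.1.1⟩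
  have hmem : sInf S ∈ S := hScl.csInf_mem hSne hSbdd
  set t₀ := sInf S with ht₀
  have ht₀pos : 0 < t₀ := by
    rcases lt_or_eq_of_le hmem.1.1 with h | h
    · exact h
    · exfalso; apply h0K; have := hmem.2; rw [← h, zero_smul] at this; exact this
  refine ⟨t₀, ht₀pos, hmem.1.2, ?_⟩
  rw [hKcl.frontier_eq]
  refine ⟨hmem.2, fun hint => ?_⟩
  have hopen : IsOpen ((fun t : ℝ => t • x) ⁻¹' interior K) :=
    isOpen_interior.preimage hcont
  rcases Metric.isOpen_iff.1 hopen t₀ hint with ⟨ε, hε, hball⟩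
  set t := t₀ - min (ε / 2) (t₀ / 2) with htdef
  have hmin_pos : 0 < min (ε / 2) (t₀ / 2) := lt_min (by linarith) (by linarith)
  have ht_lt : t < t₀ := by simp only [htdef]; linarith
  have ht_pos : 0 < t := by
    have : min (ε / 2) (t₀ / 2) ≤ t₀ / 2 := min_le_right _ _
    simp only [htdef]; linarith
  have htball : t ∈ Metric.ball t₀ ε := by
    rw [Metric.mem_ball, Real.dist_eq]
    have h1 : min (ε / 2) (t₀ / 2) ≤ ε / 2 := min_le_left _ _
    rw [htdef]; rw [abs_sub_lt_iff]; constructor <;> linarith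
  have htS : t ∈ S := ⟨⟨ht_pos.le, le_trans ht_lt.le hmem.1.2⟩,
    interior_subset (hball htball)⟩
  exact absurd (csInf_le hSbdd htS) (not_le.2 ht_lt)

/-- If `K ⊆ ℝ²` is closed and convex and `0` lies in the interior of its complement,
then the boundary `∂K` is homogenization-convex. -/
theorem frontier_homogenizationConvex_of_zero_mem_interior_compl
    (K : Set (ℝ × ℝ)) (hKcl : IsClosed K) (hKcv : Convex ℝ K)
    (h0 : (0 : ℝ × ℝ) ∈ interior Kᶜ) :
    Convex ℝ (closure (homHull (frontier K))) := by
  have h0K : (0 : ℝ × ℝ) ∉ K := interior_subset h0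
  have heq : homHull (frontier K) = homHull K := by
    apply Set.Subset.antisymm
    · rintro y ⟨τ, hτ, x, hx, rfl⟩
      exact ⟨τ, hτ, x, by rw [← hKcl.closure_eq]; exact frontier_subset_closure hx, rfl⟩
    · rintro y ⟨τ, hτ, x, hx, rfl⟩
      obtain ⟨t, htpos, ht1, htf⟩ := crossing hKcl h0K hx
      exact ⟨τ / t, div_nonneg hτ htpos.le, t • x, htf, by
        rw [smul_smul, div_mul_cancel₀ _ (ne_of_gt htpos)]⟩
  rw [heq]
  exact (homHull_convex hKcv).closure
end

section
/- For closed convex cones K₁, K₂ ⊆ ℝ², the dual cone of their intersection equals the sum of their dual cones: (K₁ ∩ K₂)* = K₁* + K₂*. -/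
open Pointwise Filter

/-- The dual cone of a set `S`. -/
def dualCone (S : Set (EuclideanSpace ℝ (Fin 2))) : Set (EuclideanSpace ℝ (Fin 2)) :=
  {y | ∀ x ∈ S, 0 ≤ (inner ℝ x y : ℝ)}

local notation "V" => EuclideanSpace ℝ (Fin 2)

lemma dualCone_eq_innerDualCone (S : Set V) : dualCone S = (ProperCone.innerDual S : Set V) := by
  ext; simp [dualCone]

lemma zero_mem_dualCone (S : Set V) : (0 : V) ∈ dualCone S := fun x _ => by
  simp [inner_zero_right]

lemma isClosed_dualCone (S : Set V) : IsClosed (dualCone S) := by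
  rw [dualCone_eq_innerDualCone]; exact (ProperCone.innerDual S).isClosed

lemma dualCone_smul_mem {S : Set V} {y : V} (hy : y ∈ dualCone S) {τ : ℝ} (hτ : 0 ≤ τ) :
    τ • y ∈ dualCone S := fun x hx => by
  rw [real_inner_smul_right]; exact mul_nonneg hτ (hy x hx)

lemma dualCone_add_mem {S : Set V} {y z : V} (hy : y ∈ dualCone S) (hz : z ∈ dualCone S) :
    y + z ∈ dualCone S := fun x hx => by
  rw [inner_add_right]; exact add_nonneg (hy x hx) (hz x hx)

/-- A cone in ℝ (closed under nonnegative scaling, containing 0) is closed. -/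
lemma isClosed_real_cone (s : Set ℝ) (h0 : (0:ℝ) ∈ s)
    (hsmul : ∀ a ∈ s, ∀ τ : ℝ, 0 ≤ τ → τ * a ∈ s) : IsClosed s := by
  by_cases hp : ∃ a ∈ s, 0 < a
  · obtain ⟨a, has, ha⟩ := hp
    by_cases hn : ∃ b ∈ s, b < 0
    · obtain ⟨b, hbs, hb⟩ := hn
      have : s = Set.univ := by
        ext t
        simp only [Set.mem_univ, iff_true]
        rcases le_or_gt 0 t with ht | ht
        · have := hsmul a has (t / a) (div_nonneg ht ha.le)
          rwa [div_mul_cancel₀ _ ha.ne'] at this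
        · have := hsmul b hbs (t / b) (div_nonneg_of_nonpos ht.le hb.le)
          rwa [div_mul_cancel₀ _ hb.ne] at this
      rw [this]; exact isClosed_univ
    · push_neg at hn
      have : s = Set.Ici 0 := by
        ext t
        constructor
        · exact fun ht => hn t ht
        · intro ht
          have := hsmul a has (t / a) (div_nonneg ht ha.le)
          rwa [div_mul_cancel₀ _ ha.ne'] at this
      rw [this]; exact isClosed_Ici
  · push_neg at hp
    by_cases hn : ∃ b ∈ s, b < 0
    · obtain ⟨b, hbs, hb⟩ := hn
      have : s = Set.Iic 0 := by
        ext t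
        constructor
        · exact fun ht => hp t ht
        · intro ht
          have := hsmul b hbs (t / b) (div_nonneg_of_nonpos ht hb.le)
          rwa [div_mul_cancel₀ _ hb.ne] at this
      rw [this]; exact isClosed_Iic
    · push_neg at hn
      have : s = {0} := by
        ext t
        simp only [Set.mem_singleton_iff]
        exact ⟨fun ht => le_antisymm (hp t ht) (hn t ht), fun h => h ▸ h0⟩
      rw [this]; exact isClosed_singleton

/-- For pointed pairs of closed cones, a uniform ratio bound. -/
lemma exists_ratio_bound (C D : Set V) (hCc : IsClosed C) (hDc : IsClosed D)
    (hCs : ∀ x ∈ C, ∀ τ : ℝ, 0 ≤ τ → τ • x ∈ C)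
    (hDs : ∀ x ∈ D, ∀ τ : ℝ, 0 ≤ τ → τ • x ∈ D)
    (hpt : ∀ x ∈ C, -x ∈ D → x = 0) :
    ∃ ρ : ℝ, 0 < ρ ∧ ∀ x ∈ C, ∀ y ∈ D, ‖x‖ ≤ ρ * ‖x + y‖ := by
  by_contra h
  push_neg at h
  have hch : ∀ n : ℕ, ∃ x ∈ C, ∃ y ∈ D, (n + 1 : ℝ) * ‖x + y‖ < ‖x‖ := by
    intro n
    obtain ⟨x, hx, y, hy, hlt⟩ := h (n + 1 : ℝ) (by positivity)
    exact ⟨x, hx, y, hy, hlt⟩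
  choose x hx y hy hlt using hch
  have hxn : ∀ n, 0 < ‖x n‖ := fun n =>
    lt_of_le_of_lt (by positivity) (hlt n)
  set p : ℕ → V := fun n => ‖x n‖⁻¹ • x n with hp
  set q : ℕ → V := fun n => ‖x n‖⁻¹ • y n with hq
  have hpC : ∀ n, p n ∈ C := fun n => hCs _ (hx n) _ (inv_nonneg.2 (hxn n).le)
  have hqD : ∀ n, q n ∈ D := fun n => hDs _ (hy n) _ (inv_nonneg.2 (hxn n).le)
  have hpnorm : ∀ n, ‖p n‖ = 1 := fun n => by
    rw [hp, norm_smul, norm_inv, norm_norm, inv_mul_cancel₀ (hxn n).ne']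
  have hsum : Filter.Tendsto (fun n => p n + q n) Filter.atTop (nhds 0) := by
    rw [tendsto_zero_iff_norm_tendsto_zero]
    apply squeeze_zero (fun n => norm_nonneg _) (g := fun n : ℕ => (n + 1 : ℝ)⁻¹)
    · intro n
      have h1 : ‖p n + q n‖ = ‖x n‖⁻¹ * ‖x n + y n‖ := by
        rw [hp, hq, ← smul_add, norm_smul, norm_inv, norm_norm]
      rw [h1]
      have hn1 : (0:ℝ) < (n:ℝ) + 1 := by positivity
      have h2 : ‖x n + y n‖ ≤ ((n:ℝ)+1)⁻¹ * ‖x n‖ := by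
        rw [inv_mul_eq_div, le_div_iff₀ hn1]
        nlinarith [hlt n]
      calc ‖x n‖⁻¹ * ‖x n + y n‖ ≤ ‖x n‖⁻¹ * (((n:ℝ)+1)⁻¹ * ‖x n‖) :=
            mul_le_mul_of_nonneg_left h2 (inv_nonneg.2 (hxn n).le)
        _ = ((n:ℝ)+1)⁻¹ := by
            rw [mul_comm (((n:ℝ)+1)⁻¹) (‖x n‖), ← mul_assoc,
              inv_mul_cancel₀ (hxn n).ne', one_mul]
    · exact tendsto_one_div_add_atTop_nhds_zero_nat.congr (by intro n; simp [one_div])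
  obtain ⟨a, -, φ, hφ, hpa⟩ := tendsto_subseq_of_bounded
    (Metric.isBounded_sphere (x := (0:V)) (r := 1))
    (fun n => by simp only [Metric.mem_sphere, dist_zero_right]; exact hpnorm n)
  have haC : a ∈ C := hCc.mem_of_tendsto hpa (Filter.Eventually.of_forall fun k => hpC (φ k))
  have hqa : Filter.Tendsto (fun k => q (φ k)) Filter.atTop (nhds (-a)) := by
    have h1 : Filter.Tendsto (fun k => p (φ k) + q (φ k)) Filter.atTop (nhds 0) :=
      hsum.comp hφ.tendsto_atTop
    have := h1.sub hpa
    simpa using this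
  have haD : -a ∈ D := hDc.mem_of_tendsto hqa (Filter.Eventually.of_forall fun k => hqD (φ k))
  have ha0 : a = 0 := hpt a haC haD
  have : ‖a‖ = 1 := by
    have h1 := (continuous_norm.tendsto a).comp hpa
    have h2 : Filter.Tendsto (fun k => ‖p (φ k)‖) Filter.atTop (nhds 1) := by
      simpa [hpnorm] using tendsto_const_nhds (α := ℕ) (x := (1:ℝ))
    exact tendsto_nhds_unique h1 h2
  rw [ha0] at this; simp at this

/-- The sum of two closed convex cones in ℝ² is closed. -/
lemma isClosed_add_cones (C D : Set V) (hCc : IsClosed C) (hDc : IsClosed D)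
    (hC0 : (0:V) ∈ C) (hD0 : (0:V) ∈ D)
    (hCa : ∀ x ∈ C, ∀ y ∈ C, x + y ∈ C) (hDa : ∀ x ∈ D, ∀ y ∈ D, x + y ∈ D)
    (hCs : ∀ x ∈ C, ∀ τ : ℝ, 0 ≤ τ → τ • x ∈ C)
    (hDs : ∀ x ∈ D, ∀ τ : ℝ, 0 ≤ τ → τ • x ∈ D) :
    IsClosed (C + D) := by
  by_cases hpt : ∀ x ∈ C, -x ∈ D → x = 0
  · -- pointed case
    apply IsSeqClosed.isClosed
    intro u z hu huz
    have hch : ∀ n, ∃ c ∈ C, ∃ d ∈ D, c + d = u n := fun n => Set.mem_add.1 (hu n)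
    choose c hc d hd hcd using hch
    obtain ⟨ρ, hρ, hbound⟩ := exists_ratio_bound C D hCc hDc hCs hDs hpt
    obtain ⟨M, hM⟩ : ∃ M, ∀ n, ‖u n‖ ≤ M := by
      obtain ⟨M, hM⟩ := huz.norm.bddAbove_range
      exact ⟨M, fun n => hM ⟨n, rfl⟩⟩
    have hcb : ∀ n, c n ∈ Metric.closedBall (0:V) (ρ * M) := fun n => by
      rw [Metric.mem_closedBall, dist_zero_right]
      calc ‖c n‖ ≤ ρ * ‖c n + d n‖ := hbound _ (hc n) _ (hd n)
        _ = ρ * ‖u n‖ := by rw [hcd n]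
        _ ≤ ρ * M := mul_le_mul_of_nonneg_left (hM n) hρ.le
    obtain ⟨a, -, φ, hφ, hca⟩ :=
      tendsto_subseq_of_bounded Metric.isBounded_closedBall hcb
    have haC : a ∈ C := hCc.mem_of_tendsto hca (.of_forall fun k => hc (φ k))
    have hda : Tendsto (fun k => d (φ k)) atTop (nhds (z - a)) := by
      have h1 : Tendsto (fun k => u (φ k)) atTop (nhds z) := huz.comp hφ.tendsto_atTop
      have h2 := h1.sub hca
      apply h2.congr
      intro k
      simp only [Function.comp_apply]
      rw [← hcd (φ k)]; abel
    have haD : z - a ∈ D := hDc.mem_of_tendsto hda (.of_forall fun k => hd (φ k))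
    exact Set.mem_add.2 ⟨a, haC, z - a, haD, by abel⟩
  · -- E contains a line
    push_neg at hpt
    obtain ⟨v, hvC, hvD, hv0⟩ := hpt
    set E := C + D with hE
    have hE0 : (0:V) ∈ E := by simpa using Set.add_mem_add hC0 hD0
    have hEadd : ∀ a ∈ E, ∀ b ∈ E, a + b ∈ E := by
      rintro a ha b hb
      obtain ⟨c₁, hc₁, d₁, hd₁, rfl⟩ := Set.mem_add.1 ha
      obtain ⟨c₂, hc₂, d₂, hd₂, rfl⟩ := Set.mem_add.1 hb
      exact Set.mem_add.2 ⟨c₁ + c₂, hCa _ hc₁ _ hc₂, d₁ + d₂, hDa _ hd₁ _ hd₂, by abel⟩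
    have hEs : ∀ a ∈ E, ∀ τ : ℝ, 0 ≤ τ → τ • a ∈ E := by
      rintro a ha τ hτ
      obtain ⟨c₁, hc₁, d₁, hd₁, rfl⟩ := Set.mem_add.1 ha
      exact Set.mem_add.2 ⟨τ • c₁, hCs _ hc₁ _ hτ, τ • d₁, hDs _ hd₁ _ hτ, by
        rw [smul_add]⟩
    have hvE : v ∈ E := by simpa using Set.add_mem_add hvC hD0
    have hvE' : -v ∈ E := by simpa using Set.add_mem_add hC0 hvD
    have hline : ∀ t : ℝ, t • v ∈ E := by
      intro t
      rcases le_or_gt 0 t with ht | ht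
      · exact hEs v hvE t ht
      · have := hEs (-v) hvE' (-t) (by linarith)
        simpa [smul_neg, neg_smul] using this
    have hspan : ¬ (ℝ ∙ v) = ⊤ := by
      intro h
      have h1 : Module.finrank ℝ (ℝ ∙ v) = 1 := finrank_span_singleton hv0
      have h2 : Module.finrank ℝ (EuclideanSpace ℝ (Fin 2)) = 2 :=
        finrank_euclideanSpace_fin
      rw [h] at h1
      rw [finrank_top] at h1
      omega
    obtain ⟨w, hwmem, hw0⟩ : ∃ w ∈ (ℝ ∙ v)ᗮ, w ≠ 0 := by
      by_contra h
      push_neg at h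
      have : (ℝ ∙ v)ᗮ = ⊥ := by
        rw [Submodule.eq_bot_iff]
        exact fun x hx => h x hx
      rw [Submodule.orthogonal_eq_bot_iff] at this
      exact hspan this
    have hvw : (inner ℝ v w : ℝ) = 0 :=
      (Submodule.mem_orthogonal _ w).1 hwmem v (Submodule.mem_span_singleton_self v)
    have hker : ∀ x : V, (inner ℝ x w : ℝ) = 0 → ∃ t : ℝ, x = t • v := by
      have hspan_eq : (ℝ ∙ v) = (ℝ ∙ w)ᗮ := by
        apply Submodule.eq_of_le_of_finrank_eq
        · rw [Submodule.span_singleton_le_iff_mem]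
          rw [Submodule.mem_orthogonal_singleton_iff_inner_right]
          rwa [real_inner_comm] at hvw
        · have h1 : Module.finrank ℝ (ℝ ∙ v) = 1 := finrank_span_singleton hv0
          have h2 : Module.finrank ℝ (ℝ ∙ w) = 1 := finrank_span_singleton hw0
          have h3 := Submodule.finrank_add_finrank_orthogonal (K := (ℝ ∙ w))
          have h4 : Module.finrank ℝ (EuclideanSpace ℝ (Fin 2)) = 2 :=
            finrank_euclideanSpace_fin
          omega
      intro x hx
      have : x ∈ (ℝ ∙ w)ᗮ := by
        rw [Submodule.mem_orthogonal_singleton_iff_inner_right]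
        rwa [real_inner_comm]
      rw [← hspan_eq, Submodule.mem_span_singleton] at this
      obtain ⟨t, ht⟩ := this
      exact ⟨t, ht.symm⟩
    have hEeq : E = (fun x : V => (inner ℝ x w : ℝ)) ⁻¹' ((fun x : V => (inner ℝ x w : ℝ)) '' E) := by
      apply Set.Subset.antisymm (Set.subset_preimage_image _ _)
      rintro x ⟨e, heE, he⟩
      dsimp only at he
      have hxe : (inner ℝ (x - e) w : ℝ) = 0 := by
        rw [inner_sub_left, he, sub_self]
      obtain ⟨t, ht⟩ := hker _ hxe
      have : x = e + t • v := by rw [← ht]; abel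
      rw [this]
      exact hEadd e heE _ (hline t)
    rw [hEeq]
    apply IsClosed.preimage (Continuous.inner continuous_id continuous_const)
    apply isClosed_real_cone
    · exact ⟨0, hE0, inner_zero_left w⟩
    · rintro a ⟨e, heE, rfl⟩ τ hτ
      exact ⟨τ • e, hEs e heE τ hτ, by dsimp only; rw [real_inner_smul_left]⟩

/-- Double dual of a nonempty closed convex cone. -/
lemma dualCone_dualCone (K : Set V) (hne : K.Nonempty) (hcl : IsClosed K)
    (hcv : Convex ℝ K) (hcone : ∀ x ∈ K, ∀ τ : ℝ, 0 ≤ τ → τ • x ∈ K) :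
    dualCone (dualCone K) = K := by
  let Kc : ProperCone ℝ (EuclideanSpace ℝ (Fin 2)) :=
    { carrier := K
      zero_mem' := by obtain ⟨x, hx⟩ := hne; simpa using hcone x hx 0 le_rfl
      isClosed' := hcl
      smul_mem' := fun c x hx => hcone x hx c.1 c.2
      add_mem' := fun {x} {y} hx hy => by
        have h := hcv hx hy (by norm_num : (0:ℝ) ≤ 1/2) (by norm_num : (0:ℝ) ≤ 1/2)
          (by norm_num)
        have h2 := hcone _ h 2 (by norm_num)
        have : (2:ℝ) • ((1/2 : ℝ) • x + (1/2 : ℝ) • y) = x + y := by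
          rw [smul_add, smul_smul, smul_smul]
          norm_num
        rwa [this] at h2 }
  have hcoe : (Kc : Set (EuclideanSpace ℝ (Fin 2))) = K := rfl
  have hdd := ProperCone.innerDual_innerDual Kc
  have := congrArg (fun (c : ProperCone ℝ (EuclideanSpace ℝ (Fin 2))) =>
    (c : Set (EuclideanSpace ℝ (Fin 2)))) hdd
  simpa [dualCone_eq_innerDualCone, hcoe] using this

/-- For closed convex cones `K₁, K₂ ⊆ ℝ²`, `(K₁ ∩ K₂)* = K₁* + K₂*`. -/
theorem dualCone_inter_eq_add_of_closed_cones (K₁ K₂ : Set (EuclideanSpace ℝ (Fin 2)))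
    (h₁cl : IsClosed K₁) (h₁cv : Convex ℝ K₁)
    (h₁cone : ∀ x ∈ K₁, ∀ τ : ℝ, 0 ≤ τ → τ • x ∈ K₁)
    (h₂cl : IsClosed K₂) (h₂cv : Convex ℝ K₂)
    (h₂cone : ∀ x ∈ K₂, ∀ τ : ℝ, 0 ≤ τ → τ • x ∈ K₂) :
    dualCone (K₁ ∩ K₂) = dualCone K₁ + dualCone K₂ := by
  have hdempty : dualCone (∅ : Set V) = Set.univ :=
    Set.eq_univ_of_forall fun z x hx => absurd hx (Set.notMem_empty x)
  rcases Set.eq_empty_or_nonempty K₁ with h1 | h1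
  · rw [h1, Set.empty_inter, hdempty]
    symm
    apply Set.eq_univ_of_forall
    intro z
    simpa using Set.add_mem_add (Set.mem_univ z) (zero_mem_dualCone K₂)
  rcases Set.eq_empty_or_nonempty K₂ with h2 | h2
  · rw [h2, Set.inter_empty, hdempty]
    symm
    apply Set.eq_univ_of_forall
    intro z
    simpa using Set.add_mem_add (zero_mem_dualCone K₁) (Set.mem_univ z)
  -- both nonempty
  have h₁0 : (0:V) ∈ K₁ := by
    obtain ⟨x, hx⟩ := h1
    simpa using h₁cone x hx 0 le_rfl
  have h₂0 : (0:V) ∈ K₂ := by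
    obtain ⟨x, hx⟩ := h2
    simpa using h₂cone x hx 0 le_rfl
  set A := dualCone K₁ with hA
  set B := dualCone K₂ with hB
  have hABcl : IsClosed (A + B) :=
    isClosed_add_cones A B (isClosed_dualCone K₁) (isClosed_dualCone K₂)
      (zero_mem_dualCone K₁) (zero_mem_dualCone K₂)
      (fun x hx y hy => dualCone_add_mem hx hy) (fun x hx y hy => dualCone_add_mem hx hy)
      (fun x hx τ hτ => dualCone_smul_mem hx hτ) (fun x hx τ hτ => dualCone_smul_mem hx hτ)
  have hABne : (A + B).Nonempty :=
    ⟨0, by simpa using Set.add_mem_add (zero_mem_dualCone K₁) (zero_mem_dualCone K₂)⟩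
  have hABadd : ∀ x ∈ A + B, ∀ y ∈ A + B, x + y ∈ A + B := by
    rintro x hx y hy
    obtain ⟨a₁, ha₁, b₁, hb₁, rfl⟩ := Set.mem_add.1 hx
    obtain ⟨a₂, ha₂, b₂, hb₂, rfl⟩ := Set.mem_add.1 hy
    exact Set.mem_add.2 ⟨a₁ + a₂, dualCone_add_mem ha₁ ha₂, b₁ + b₂,
      dualCone_add_mem hb₁ hb₂, by abel⟩
  have hABs : ∀ x ∈ A + B, ∀ τ : ℝ, 0 ≤ τ → τ • x ∈ A + B := by
    rintro x hx τ hτ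
    obtain ⟨a₁, ha₁, b₁, hb₁, rfl⟩ := Set.mem_add.1 hx
    exact Set.mem_add.2 ⟨τ • a₁, dualCone_smul_mem ha₁ hτ, τ • b₁,
      dualCone_smul_mem hb₁ hτ, by rw [smul_add]⟩
  have hABcv : Convex ℝ (A + B) := by
    intro x hx y hy a b ha hb hab
    exact hABadd _ (hABs x hx a ha) _ (hABs y hy b hb)
  have hstep : dualCone (A + B) = K₁ ∩ K₂ := by
    ext y
    constructor
    · intro hy
      constructor
      · rw [← dualCone_dualCone K₁ h1 h₁cl h₁cv h₁cone]
        intro x hx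
        exact hy x (by simpa using Set.add_mem_add hx (zero_mem_dualCone K₂))
      · rw [← dualCone_dualCone K₂ h2 h₂cl h₂cv h₂cone]
        intro x hx
        exact hy x (by simpa using Set.add_mem_add (zero_mem_dualCone K₁) hx)
    · rintro ⟨hy₁, hy₂⟩ x hx
      obtain ⟨a, ha, b, hb, rfl⟩ := Set.mem_add.1 hx
      rw [inner_add_left]
      have h1' : (0:ℝ) ≤ inner ℝ a y := by
        rw [real_inner_comm]; exact ha y hy₁
      have h2' : (0:ℝ) ≤ inner ℝ b y := by
        rw [real_inner_comm]; exact hb y hy₂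
      exact add_nonneg h1' h2'
  calc dualCone (K₁ ∩ K₂) = dualCone (dualCone (A + B)) := by rw [hstep]
    _ = A + B := dualCone_dualCone (A + B) hABne hABcl hABcv hABs
end

section
/- Let V be a real Hilbert space, ψ, φ : V → ℝ continuous linear forms, W = (ker φ ∩ ker ψ)^⊥, and π_W the orthogonal projection onto W. Let C ⊆ V be a set such that φ(x₀) > 0 for some x₀ ∈ C and such that π_W(C) is homogenization-convex in W (a space of dimension at most 2). Then: ψ(x) ≥ 0 for all x ∈ C with φ(x) ≥ 0, if and only if there exists ξ ≥ 0 with ψ(x) − ξφ(x) ≥ 0 for all x ∈ C. -/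
private lemma slope_le_aux {a b c d : ℝ} (ha : a < 0) (hc : 0 < c)
    (h : d * a ≤ b * c) : b / a ≤ d / c := by
  have hac : a * c < 0 := mul_neg_of_neg_of_pos ha hc
  have heq : b / a - d / c = (b * c - a * d) / (a * c) := div_sub_div _ _ ha.ne hc.ne'
  have h2 : (b * c - a * d) / (a * c) ≤ 0 :=
    div_nonpos_iff.mpr (Or.inl ⟨by linarith, hac.le⟩)
  linarith [heq ▸ h2]


/-- Generalized 2D S-Lemma in a real Hilbert space `V`: for continuous linear forms
`ψ, φ` and `W = (ker φ ∩ ker ψ)ᗮ`, if some `x₀ ∈ C` has `φ x₀ > 0` and the image of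
`C` under the orthogonal projection `π_W` (described here by the orthogonal
decomposition `x = w + m` with `w ∈ W`, `m ∈ ker φ ⊓ ker ψ`) is
homogenization-convex, then `ψ ≥ 0` on `{x ∈ C : φ x ≥ 0}` iff `ψ - ξφ ≥ 0` on `C`
for some `ξ ≥ 0`. -/
theorem generalized_S_lemma {V : Type*} [NormedAddCommGroup V]
    [InnerProductSpace ℝ V] [CompleteSpace V]
    (ψ φ : V →L[ℝ] ℝ) (C : Set V)
    (x₀ : V) (hx₀ : x₀ ∈ C) (hφx₀ : 0 < φ x₀)
    (hproj : Convex ℝ (closure {y : V | ∃ τ : ℝ, 0 ≤ τ ∧ ∃ w,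
      (w ∈ (LinearMap.ker (φ : V →ₗ[ℝ] ℝ) ⊓ LinearMap.ker (ψ : V →ₗ[ℝ] ℝ) : Submodule ℝ V)ᗮ ∧
        ∃ x ∈ C, x - w ∈ (LinearMap.ker (φ : V →ₗ[ℝ] ℝ) ⊓ LinearMap.ker (ψ : V →ₗ[ℝ] ℝ) : Submodule ℝ V)) ∧
      y = τ • w})) :
    (∀ x ∈ C, 0 ≤ φ x → 0 ≤ ψ x) ↔
      ∃ ξ : ℝ, 0 ≤ ξ ∧ ∀ x ∈ C, 0 ≤ ψ x - ξ * φ x := by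
  constructor
  · intro h
    set M : Submodule ℝ V := LinearMap.ker (φ : V →ₗ[ℝ] ℝ) ⊓ LinearMap.ker (ψ : V →ₗ[ℝ] ℝ) with hMdef
    set D : Set V := {y : V | ∃ τ : ℝ, 0 ≤ τ ∧ ∃ w,
      (w ∈ Mᗮ ∧ ∃ x ∈ C, x - w ∈ M) ∧ y = τ • w} with hDdef
    -- `M` is closed, so it has orthogonal projections
    have hMclosed : IsClosed ((M : Submodule ℝ V) : Set V) := by
      rw [hMdef]
      simpa [Submodule.coe_inf] using
        (ContinuousLinearMap.isClosed_ker φ).inter (ContinuousLinearMap.isClosed_ker ψ)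
    haveI : CompleteSpace M := hMclosed.completeSpace_coe
    -- values of φ, ψ only depend on the component in Mᗮ
    have hval : ∀ w x : V, x - w ∈ M → φ w = φ x ∧ ψ w = ψ x := by
      intro w x hxw
      rw [hMdef, Submodule.mem_inf, LinearMap.mem_ker, LinearMap.mem_ker] at hxw
      obtain ⟨h1, h2⟩ := hxw
      simp only [map_sub, ContinuousLinearMap.coe_coe] at h1 h2
      constructor <;> linarith
    -- every point of C gives a point of D with the same φ, ψ values
    have hDmem : ∀ x ∈ C, ∃ y ∈ D, φ y = φ x ∧ ψ y = ψ x := by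
      intro x hx
      refine ⟨x - (M.orthogonalProjectionOnto x : V), ⟨1, zero_le_one,
        x - (M.orthogonalProjectionOnto x : V),
        ⟨Submodule.sub_starProjection_mem_orthogonal x, x, hx, ?_⟩, (one_smul ℝ _).symm⟩, ?_⟩
      · simp
      · exact hval _ x (by simp)
    -- the projected cone in ℝ²
    set f : V → ℝ × ℝ := fun v => (φ v, ψ v) with hfdef
    have hflin : IsLinearMap ℝ f := ⟨fun a b => by simp [hfdef, Prod.ext_iff],
      fun c a => by simp [hfdef, Prod.ext_iff]⟩
    set Q : Set (ℝ × ℝ) := f '' closure D with hQdef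
    have hQconv : Convex ℝ Q := hproj.is_linear_image hflin
    -- the image of C lands in Q
    have hQmem : ∀ x ∈ C, (φ x, ψ x) ∈ Q := by
      intro x hx
      obtain ⟨y, hyD, hy1, hy2⟩ := hDmem x hx
      exact ⟨y, subset_closure hyD, by simp [hfdef, hy1, hy2]⟩
    have hp₀ : (φ x₀, ψ x₀) ∈ Q := hQmem x₀ hx₀
    have hb₀ : 0 ≤ ψ x₀ := h x₀ hx₀ hφx₀.le
    -- no point of Q lies in the open fourth quadrant
    have hQ4 : ∀ q ∈ Q, 0 < q.1 → 0 ≤ q.2 := by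
      intro q hq hq1
      by_contra hq2
      push_neg at hq2
      obtain ⟨y, hyK, rfl⟩ := hq
      simp only [hfdef] at hq1 hq2
      have hyU : y ∈ {v : V | 0 < φ v ∧ ψ v < 0} := ⟨hq1, hq2⟩
      have hUopen : IsOpen {v : V | 0 < φ v ∧ ψ v < 0} :=
        (isOpen_lt continuous_const φ.continuous).inter
          (isOpen_lt ψ.continuous continuous_const)
      obtain ⟨y', hy'U, hy'D⟩ := mem_closure_iff.mp hyK _ hUopen hyU
      obtain ⟨τ, hτ, w, ⟨hw, x, hxC, hxw⟩, rfl⟩ := hy'D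
      obtain ⟨hφw, hψw⟩ := hval w x hxw
      obtain ⟨hU1, hU2⟩ := hy'U
      rw [map_smul, smul_eq_mul] at hU1 hU2
      have hτpos : 0 < τ := by
        rcases lt_or_eq_of_le hτ with h' | h'
        · exact h'
        · exfalso; rw [← h'] at hU1; simp at hU1
      have hφx : 0 ≤ φ x := by nlinarith
      have hψx : 0 ≤ ψ x := h x hxC hφx
      nlinarith
    -- points of Q on the vertical axis have nonnegative second coordinate
    have hQ0 : ∀ q ∈ Q, q.1 = 0 → 0 ≤ q.2 := by
      intro q hq hq1
      by_contra hq2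
      push_neg at hq2
      set a := φ x₀ with ha
      set b := ψ x₀ with hb
      set t : ℝ := (-q.2) / (2 * (b - q.2)) with ht
      have hbq : 0 < b - q.2 := by linarith
      have ht0 : 0 < t := div_pos (by linarith) (by linarith)
      have ht1 : t ≤ 1/2 := by
        rw [ht, div_le_iff₀ (by linarith)]
        linarith
      have hz : (1 - t) • q + t • (a, b) ∈ Q :=
        hQconv hq hp₀ (by linarith) ht0.le (by ring)
      have hz1 : ((1 - t) • q + t • ((a : ℝ), b)).1 = t * a := by
        simp [Prod.smul_fst, smul_eq_mul, hq1]
      have hz2 : ((1 - t) • q + t • ((a : ℝ), b)).2 = (1 - t) * q.2 + t * b := by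
        simp [Prod.smul_snd, smul_eq_mul]
      have hpos := hQ4 _ hz (by rw [hz1]; positivity)
      rw [hz2] at hpos
      have htval : t * (b - q.2) = -q.2 / 2 := by
        rw [ht]; field_simp
      nlinarith
    -- the cross inequality from convexity
    have hcross : ∀ p ∈ Q, ∀ p' ∈ Q, p.1 < 0 → 0 < p'.1 →
        p'.2 * p.1 ≤ p.2 * p'.1 := by
      intro p hp p' hp' hp1 hp'1
      have hd : 0 < p'.1 - p.1 := by linarith
      set t : ℝ := p'.1 / (p'.1 - p.1) with ht
      have ht0 : 0 < t := by positivity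
      have ht1 : t < 1 := by
        rw [ht, div_lt_one hd]; linarith
      have hz : t • p + (1 - t) • p' ∈ Q := hQconv hp hp' ht0.le (by linarith) (by ring)
      have hz1 : (t • p + (1 - t) • p').1 = 0 := by
        simp only [Prod.fst_add, Prod.smul_fst, smul_eq_mul]
        rw [ht]; field_simp; ring
      have hz2 : (t • p + (1 - t) • p').2 = (p'.1 * p.2 - p.1 * p'.2) / (p'.1 - p.1) := by
        simp only [Prod.snd_add, Prod.smul_snd, smul_eq_mul]
        rw [ht]; field_simp; ring
      have h0 := hQ0 _ hz hz1
      rw [hz2, le_div_iff₀ hd] at h0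
      nlinarith
    -- the multiplier ξ
    set T : Set ℝ := insert 0 {r | ∃ p ∈ Q, p.1 < 0 ∧ r = p.2 / p.1} with hT
    have hTne : T.Nonempty := ⟨0, Set.mem_insert _ _⟩
    have hTbdd : BddAbove T := by
      refine ⟨max 0 (ψ x₀ / φ x₀), ?_⟩
      rintro r (rfl | ⟨p, hp, hp1, rfl⟩)
      · exact le_max_left _ _
      · exact le_trans (slope_le_aux hp1 hφx₀ (hcross p hp _ hp₀ hp1 hφx₀))
          (le_max_right _ _)
    set ξ : ℝ := sSup T with hξdef
    have hξ0 : 0 ≤ ξ := le_csSup hTbdd (Set.mem_insert _ _)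
    have hmain : ∀ q ∈ Q, ξ * q.1 ≤ q.2 := by
      intro q hq
      rcases lt_trichotomy q.1 0 with h1 | h1 | h1
      · have hmem : q.2 / q.1 ∈ T := Set.mem_insert_of_mem _ ⟨q, hq, h1, rfl⟩
        have hle := le_csSup hTbdd hmem
        calc ξ * q.1 ≤ (q.2 / q.1) * q.1 := mul_le_mul_of_nonpos_right hle h1.le
          _ = q.2 := div_mul_cancel₀ _ h1.ne
      · rw [h1, mul_zero]; exact hQ0 q hq h1
      · have hle : ξ ≤ q.2 / q.1 := by
          apply csSup_le hTne
          rintro r (rfl | ⟨p, hp, hp1, rfl⟩)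
          · exact div_nonneg (hQ4 q hq h1) h1.le
          · exact slope_le_aux hp1 h1 (hcross p hp q hq hp1 h1)
        calc ξ * q.1 ≤ (q.2 / q.1) * q.1 := mul_le_mul_of_nonneg_right hle h1.le
          _ = q.2 := div_mul_cancel₀ _ h1.ne'
    refine ⟨ξ, hξ0, fun x hx => ?_⟩
    have hfin := hmain _ (hQmem x hx)
    simp only at hfin
    linarith
  · rintro ⟨ξ, hξ, hξle⟩ x hx hφx
    have := hξle x hx
    nlinarith
end

section
/- (S-Lemma) Let g, h : ℝⁿ → ℝ be quadratic functions (of the form x ↦ xᵀQx + 2ℓᵀx + c with Q symmetric) and suppose h(x₀) > 0 for some x₀ ∈ ℝⁿ. Then g(x) ≥ 0 for all x with h(x) ≥ 0 if and only if there exists ξ ≥ 0 such that g(x) − ξh(x) ≥ 0 for all x ∈ ℝⁿ. -/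
open Matrix

private lemma key_real (a b c d e p : ℝ) (hb : b < 0) (hd : 0 < d)
    (H : ∀ s : ℝ, b*s^2 + 2*e*s + d = 0 → 0 ≤ a*s^2 + 2*p*s + c) :
    c * b ≤ a * d := by
  have hb' : b ≠ 0 := ne_of_lt hb
  set D := Real.sqrt (e^2 - b*d) with hDdef
  have hD2 : D^2 = e^2 - b*d := Real.sq_sqrt (by nlinarith)
  have hD0 : 0 ≤ D := Real.sqrt_nonneg _
  have hDabs : |e| < D := by
    nlinarith [sq_abs e, abs_nonneg e]
  have he1 : -e < D := by cases abs_cases e with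
    | inl h => nlinarith | inr h => nlinarith
  have he2 : e < D := by cases abs_cases e with
    | inl h => nlinarith | inr h => nlinarith
  set s₁ := (-e - D)/b with hs₁def
  set s₂ := (-e + D)/b with hs₂def
  have hs₁ : 0 < s₁ := div_pos_of_neg_of_neg (by linarith) hb
  have hs₂ : s₂ < 0 := div_neg_of_pos_of_neg (by linarith) hb
  have hr₁ : b*s₁^2 + 2*e*s₁ + d = 0 := by
    have hbs : b*s₁ = -e - D := by rw [hs₁def]; field_simp
    have hm : b*(b*s₁^2 + 2*e*s₁ + d) = 0 := by linear_combination (b*s₁ + e - D)*hbs + hD2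
    exact (mul_eq_zero.mp hm).resolve_left hb'
  have hr₂ : b*s₂^2 + 2*e*s₂ + d = 0 := by
    have hbs : b*s₂ = -e + D := by rw [hs₂def]; field_simp
    have hm : b*(b*s₂^2 + 2*e*s₂ + d) = 0 := by linear_combination (b*s₂ + e + D)*hbs + hD2
    exact (mul_eq_zero.mp hm).resolve_left hb'
  have hψ₁ := H s₁ hr₁
  have hψ₂ := H s₂ hr₂
  have hprod : b * (s₁*s₂) = d := by
    field_simp [hs₁def, hs₂def]
    nlinarith [hD2]
  have h1 : s₂*(a*s₁^2+2*p*s₁+c) ≤ 0 := mul_nonpos_of_nonpos_of_nonneg hs₂.le hψ₁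
  have h2 : 0 ≤ s₁*(a*s₂^2+2*p*s₂+c) := mul_nonneg hs₁.le hψ₂
  have h3 : (s₁ - s₂)*(a*(s₁*s₂) - c) =
      s₂*(a*s₁^2+2*p*s₁+c) - s₁*(a*s₂^2+2*p*s₂+c) := by ring
  have h5 : 0 < s₁ - s₂ := by linarith
  have h4 : a*(s₁*s₂) - c ≤ 0 := by
    by_contra h
    push_neg at h
    nlinarith [mul_pos h5 h]
  have h6 : b*c ≤ b*(a*(s₁*s₂)) := mul_le_mul_of_nonpos_left (by linarith) hb.le
  calc c * b = b * c := by ring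
    _ ≤ b*(a*(s₁*s₂)) := h6
    _ = a * (b * (s₁ * s₂)) := by ring
    _ = a * d := by rw [hprod]

private lemma cross_div (fw fz gw gz : ℝ) (hgw : gw < 0) (hgz : 0 < gz)
    (key : fz * gw ≤ fw * gz) : fw / gw ≤ fz / gz := by
  rw [le_div_iff₀ hgz, div_mul_eq_mul_div, div_le_iff_of_neg hgw]
  linarith

private lemma no_neg_quad (q P C : ℝ) (hq : q < 0)
    (h : ∀ T : ℝ, 0 ≤ T → 0 ≤ q*T^2 + 2*P*T + C) : False := by
  set T := max 1 ((2*|P| + |C| + 1)/(-q)) with hT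
  have hT1 : (1:ℝ) ≤ T := le_max_left _ _
  have hT2 : (2*|P| + |C| + 1)/(-q) ≤ T := le_max_right _ _
  have h3 : q*T ≤ -(2*|P| + |C| + 1) := by
    rw [div_le_iff₀ (by linarith : (0:ℝ) < -q)] at hT2; nlinarith
  have h4 : q*T + 2*P ≤ -(|C|+1) := by nlinarith [le_abs_self P]
  have h5 : T*(q*T+2*P) ≤ T*(-(|C|+1)) :=
    mul_le_mul_of_nonneg_left h4 (by linarith)
  have h6 : T*(-(|C|+1)) ≤ 1*(-(|C|+1)) := by
    apply mul_le_mul_of_nonpos_right hT1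
    nlinarith [abs_nonneg C]
  have h7 := h T (by linarith)
  nlinarith [le_abs_self C, neg_abs_le C]

private lemma homog_s_lemma {V : Type*} [AddCommGroup V] [Module ℝ V] (f g : V → ℝ)
    (hf : ∀ z w : V, ∃ p : ℝ, ∀ s : ℝ, f (s • z + w) = f z * s^2 + 2*p*s + f w)
    (hg : ∀ z w : V, ∃ p : ℝ, ∀ s : ℝ, g (s • z + w) = g z * s^2 + 2*p*s + g w)
    (H : ∀ z, 0 ≤ g z → 0 ≤ f z) (z₀ : V) (h₀ : 0 < g z₀) :
    ∃ ξ : ℝ, 0 ≤ ξ ∧ ∀ z, 0 ≤ f z - ξ * g z := by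
  have two : ∀ z w : V, g z < 0 → 0 < g w → f w * g z ≤ f z * g w := by
    intro z w hz hw
    obtain ⟨p, hp⟩ := hf z w
    obtain ⟨e, he⟩ := hg z w
    refine key_real (f z) (g z) (f w) (g w) e p hz hw (fun s hs => ?_)
    have h1 : 0 ≤ g (s • z + w) := by rw [he s]; linarith [he s, hs]
    have h2 := H _ h1
    rw [hp s] at h2
    linarith
  have div2 : ∀ z w : V, g z < 0 → 0 < g w → f z / g z ≤ f w / g w :=
    fun z w hz hw => cross_div (f z) (f w) (g z) (g w) hz hw (two z w hz hw)
  set S : Set ℝ := {r | ∃ z, g z < 0 ∧ f z / g z = r} with hS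
  have hbdd : BddAbove S := by
    refine ⟨f z₀ / g z₀, fun r hr => ?_⟩
    obtain ⟨z, hz, hzr⟩ := hr
    exact hzr ▸ div2 z z₀ hz h₀
  refine ⟨max 0 (sSup S), le_max_left _ _, fun z => ?_⟩
  rcases lt_trichotomy (g z) 0 with hz | hz | hz
  · have h1 : f z / g z ≤ max 0 (sSup S) :=
      (le_csSup hbdd ⟨z, hz, rfl⟩).trans (le_max_right _ _)
    have h2 := mul_le_mul_of_nonpos_right h1 hz.le
    rw [div_mul_cancel₀ _ (ne_of_lt hz)] at h2
    linarith
  · have h1 := H z (le_of_eq hz.symm)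
    rw [hz]
    linarith
  · have hfz : 0 ≤ f z := H z hz.le
    have h1 : sSup S ≤ f z / g z := by
      apply Real.sSup_le _ (div_nonneg hfz hz.le)
      rintro r ⟨w, hw, hwr⟩
      exact hwr ▸ div2 w z hw hz
    have h2 : max 0 (sSup S) ≤ f z / g z := max_le (div_nonneg hfz hz.le) h1
    have h3 := mul_le_mul_of_nonneg_right h2 hz.le
    rw [div_mul_cancel₀ _ (ne_of_gt hz)] at h3
    linarith

/-- Yakubovich's S-Lemma: for quadratic functions
`g x = xᵀQx + 2ℓᵀx + c` and `h x = xᵀAx + 2bᵀx + d` on `ℝⁿ` with `Q, A` symmetric,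
if `h x₀ > 0` for some `x₀`, then `g` is copositive with `h` iff there exists
`ξ ≥ 0` with `g - ξh ≥ 0` everywhere. -/
theorem s_lemma {n : ℕ} (Q A : Matrix (Fin n) (Fin n) ℝ)
    (hQ : Q.IsSymm) (hA : A.IsSymm) (ℓ b : Fin n → ℝ) (c d : ℝ)
    (x₀ : Fin n → ℝ) (hx₀ : 0 < x₀ ⬝ᵥ A.mulVec x₀ + 2 * (b ⬝ᵥ x₀) + d) :
    (∀ x : Fin n → ℝ, 0 ≤ x ⬝ᵥ A.mulVec x + 2 * (b ⬝ᵥ x) + d →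
        0 ≤ x ⬝ᵥ Q.mulVec x + 2 * (ℓ ⬝ᵥ x) + c) ↔
      ∃ ξ : ℝ, 0 ≤ ξ ∧ ∀ x : Fin n → ℝ,
        0 ≤ (x ⬝ᵥ Q.mulVec x + 2 * (ℓ ⬝ᵥ x) + c)
            - ξ * (x ⬝ᵥ A.mulVec x + 2 * (b ⬝ᵥ x) + d) := by
  constructor
  · intro Hyp
    have sQ : ∀ v w : Fin n → ℝ, v ⬝ᵥ Q.mulVec w = w ⬝ᵥ Q.mulVec v := by
      intro v w
      rw [dotProduct_mulVec, ← mulVec_transpose, hQ.eq, dotProduct_comm]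
    have sA : ∀ v w : Fin n → ℝ, v ⬝ᵥ A.mulVec w = w ⬝ᵥ A.mulVec v := by
      intro v w
      rw [dotProduct_mulVec, ← mulVec_transpose, hA.eq, dotProduct_comm]
    set f : (Fin n → ℝ) × ℝ → ℝ :=
      fun z => z.1 ⬝ᵥ Q.mulVec z.1 + 2*z.2*(ℓ ⬝ᵥ z.1) + c*z.2^2 with hfdef
    set g : (Fin n → ℝ) × ℝ → ℝ :=
      fun z => z.1 ⬝ᵥ A.mulVec z.1 + 2*z.2*(b ⬝ᵥ z.1) + d*z.2^2 with hgdef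
    have expand : ∀ (M : Matrix (Fin n) (Fin n) ℝ) (x y : Fin n → ℝ) (s : ℝ),
        (s • x + y) ⬝ᵥ M.mulVec (s • x + y) =
          s^2 * (x ⬝ᵥ M.mulVec x) + s * (x ⬝ᵥ M.mulVec y) + s * (y ⬝ᵥ M.mulVec x)
            + y ⬝ᵥ M.mulVec y := by
      intro M x y s
      simp [mulVec_add, mulVec_smul, dotProduct_add, add_dotProduct,
        dotProduct_smul, smul_dotProduct, smul_eq_mul]
      ring
    have dotexp : ∀ (v x y : Fin n → ℝ) (s : ℝ),
        v ⬝ᵥ (s • x + y) = s * (v ⬝ᵥ x) + v ⬝ᵥ y := by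
      intro v x y s
      simp [dotProduct_add, dotProduct_smul, smul_eq_mul]
    have sm : ∀ (M : Matrix (Fin n) (Fin n) ℝ) (v : Fin n → ℝ) (t : ℝ),
        (t • v) ⬝ᵥ M.mulVec (t • v) = t^2 * (v ⬝ᵥ M.mulVec v) := by
      intro M v t
      simp [mulVec_smul, dotProduct_smul, smul_dotProduct, smul_eq_mul]
      ring
    have sd : ∀ (v w : Fin n → ℝ) (t : ℝ), v ⬝ᵥ (t • w) = t * (v ⬝ᵥ w) := by
      intro v w t
      simp [dotProduct_smul, smul_eq_mul]
    have hf : ∀ z w : (Fin n → ℝ) × ℝ, ∃ p : ℝ, ∀ s : ℝ,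
        f (s • z + w) = f z * s^2 + 2*p*s + f w := by
      intro z w
      refine ⟨z.1 ⬝ᵥ Q.mulVec w.1 + z.2*(ℓ ⬝ᵥ w.1) + w.2*(ℓ ⬝ᵥ z.1) + c*z.2*w.2,
        fun s => ?_⟩
      show (s • z.1 + w.1) ⬝ᵥ Q.mulVec (s • z.1 + w.1)
          + 2*(s*z.2 + w.2)*(ℓ ⬝ᵥ (s • z.1 + w.1)) + c*(s*z.2 + w.2)^2 = _
      rw [expand, dotexp, sQ w.1 z.1]
      ring
    have hg : ∀ z w : (Fin n → ℝ) × ℝ, ∃ p : ℝ, ∀ s : ℝ,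
        g (s • z + w) = g z * s^2 + 2*p*s + g w := by
      intro z w
      refine ⟨z.1 ⬝ᵥ A.mulVec w.1 + z.2*(b ⬝ᵥ w.1) + w.2*(b ⬝ᵥ z.1) + d*z.2*w.2,
        fun s => ?_⟩
      show (s • z.1 + w.1) ⬝ᵥ A.mulVec (s • z.1 + w.1)
          + 2*(s*z.2 + w.2)*(b ⬝ᵥ (s • z.1 + w.1)) + d*(s*z.2 + w.2)^2 = _
      rw [expand, dotexp, sA w.1 z.1]
      ring
    have gone : ∀ y : Fin n → ℝ, g (y, 1) = y ⬝ᵥ A.mulVec y + 2 * (b ⬝ᵥ y) + d := by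
      intro y; show _ + _ + _ = _; ring
    have fone : ∀ y : Fin n → ℝ, f (y, 1) = y ⬝ᵥ Q.mulVec y + 2 * (ℓ ⬝ᵥ y) + c := by
      intro y; show _ + _ + _ = _; ring
    have H : ∀ z : (Fin n → ℝ) × ℝ, 0 ≤ g z → 0 ≤ f z := by
      intro z hz
      rcases eq_or_ne z.2 0 with ht | ht
      · by_contra hneg
        push_neg at hneg
        obtain ⟨pf, hpf⟩ := hf z (x₀, 1)
        obtain ⟨pg, hpg⟩ := hg z (x₀, 1)
        have hzeq : z = (z.1, (0:ℝ)) := by rw [← ht]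
        have hpt : ∀ s : ℝ, s • z + (x₀, 1) = (s • z.1 + x₀, (1:ℝ)) := by
          intro s
          rw [hzeq]
          simp
        set ε : ℝ := if 0 ≤ pg then 1 else -1 with hε
        have hε2 : ε^2 = 1 := by rcases le_or_gt 0 pg with h | h <;> simp [hε, h]
        refine no_neg_quad (f z) (pf * ε) (f (x₀, 1)) hneg (fun T hT => ?_)
        have hεpg : 0 ≤ pg * (ε * T) := by
          rcases le_or_gt 0 pg with h | h
          · simp only [hε, if_pos h]; nlinarith
          · simp only [hε, if_neg (not_le.2 h)]; nlinarith
        have hg1 : 0 < g (x₀, 1) := by rw [gone]; exact hx₀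
        have hgpos : 0 ≤ g ((ε*T) • z + (x₀, 1)) := by
          rw [hpg (ε*T)]
          nlinarith [mul_nonneg hz (sq_nonneg (ε*T))]
        have hgy : 0 ≤ ((ε*T) • z.1 + x₀) ⬝ᵥ A.mulVec ((ε*T) • z.1 + x₀)
            + 2 * (b ⬝ᵥ ((ε*T) • z.1 + x₀)) + d := by
          rw [← gone, ← hpt]; exact hgpos
        have hfy := Hyp _ hgy
        have key : 0 ≤ f ((ε*T) • z + (x₀, 1)) := by
          rw [hpt, fone]; exact hfy
        rw [hpf (ε*T)] at key
        have keq : f z * (ε*T)^2 + 2*pf*(ε*T) + f (x₀,1)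
            = f z*T^2 + 2*(pf*ε)*T + f (x₀,1) := by
          rw [mul_pow, hε2]; ring
        linarith [keq ▸ key]
      · have hz2 : (0:ℝ) < z.2^2 := by positivity
        set y := (z.2)⁻¹ • z.1 with hy
        have hgy : g z = z.2^2 * (y ⬝ᵥ A.mulVec y + 2 * (b ⬝ᵥ y) + d) := by
          show z.1 ⬝ᵥ A.mulVec z.1 + 2*z.2*(b ⬝ᵥ z.1) + d*z.2^2 = _
          rw [hy, sm, sd]
          field_simp
        have hfy : f z = z.2^2 * (y ⬝ᵥ Q.mulVec y + 2 * (ℓ ⬝ᵥ y) + c) := by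
          show z.1 ⬝ᵥ Q.mulVec z.1 + 2*z.2*(ℓ ⬝ᵥ z.1) + c*z.2^2 = _
          rw [hy, sm, sd]
          field_simp
        rw [hgy] at hz
        have h1 : 0 ≤ y ⬝ᵥ A.mulVec y + 2 * (b ⬝ᵥ y) + d :=
          nonneg_of_mul_nonneg_right hz hz2
        have h2 := Hyp y h1
        rw [hfy]
        positivity
    obtain ⟨ξ, hξ, hall⟩ := homog_s_lemma f g hf hg H (x₀, 1) (by rw [gone]; exact hx₀)
    refine ⟨ξ, hξ, fun x => ?_⟩
    have := hall (x, 1)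
    rw [fone, gone] at this
    exact this
  · rintro ⟨ξ, hξ, hall⟩ x hx
    have := hall x
    nlinarith [mul_nonneg hξ hx]
end

section
/- A quadratic function g(x) = xᵀQx + 2ℓᵀx + c on ℝⁿ (Q symmetric) satisfies g(x) ≥ 0 for all x ∈ ℝⁿ if and only if the (n+1)×(n+1) symmetric block matrix [[Q, ℓ],[ℓᵀ, c]] is positive semidefinite. -/
open Matrix

lemma aux_leading_nonneg {a b c : ℝ} (h : ∀ s : ℝ, 0 ≤ a * s ^ 2 + b * s + c) :
    0 ≤ a := by
  by_contra hlt
  push_neg at hlt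
  have hane : a ≠ 0 := ne_of_lt hlt
  have hna : 0 < -a := by linarith
  set t := Real.sqrt ((|c| + 1) / (-a)) with ht
  have ht2 : t ^ 2 = (|c| + 1) / (-a) :=
    Real.sq_sqrt (le_of_lt (div_pos (by positivity) hna))
  have hat : a * t ^ 2 = -(|c| + 1) := by
    rw [ht2]; field_simp
  have h1 := h t
  have h2 := h (-t)
  nlinarith [le_abs_self c]

/-- A quadratic function `g x = xᵀQx + 2ℓᵀx + c` (with `Q` symmetric) is nonnegative
on all of `ℝⁿ` iff the block matrix `[[Q, ℓ], [ℓᵀ, c]]` is positive semidefinite. -/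
theorem quadratic_nonneg_iff_posSemidef {n : ℕ} (Q : Matrix (Fin n) (Fin n) ℝ)
    (hQ : Q.IsSymm) (ℓ : Fin n → ℝ) (c : ℝ) :
    (∀ x : Fin n → ℝ, 0 ≤ x ⬝ᵥ Q.mulVec x + 2 * (ℓ ⬝ᵥ x) + c) ↔
      (Matrix.fromBlocks Q (Matrix.replicateCol (Fin 1) ℓ) (Matrix.replicateRow (Fin 1) ℓ)
        (Matrix.of fun _ _ => c)).PosSemidef := by
  set M := Matrix.fromBlocks Q (Matrix.replicateCol (Fin 1) ℓ) (Matrix.replicateRow (Fin 1) ℓ)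
    (Matrix.of fun _ _ => c) with hM
  have key : ∀ (x : Fin n → ℝ) (t : ℝ),
      Sum.elim x (fun _ => t) ⬝ᵥ (M *ᵥ Sum.elim x (fun _ => t))
        = x ⬝ᵥ Q *ᵥ x + 2 * (ℓ ⬝ᵥ x) * t + c * t ^ 2 := by
    intro x t
    have hsum : ((∑ i, t * (ℓ i * x i)) + ∑ i, x i * (ℓ i * t))
        = (∑ i, 2 * (ℓ i * x i)) * t := by
      rw [Finset.sum_mul, ← Finset.sum_add_distrib]
      exact Finset.sum_congr rfl fun i _ => by ring
    have hct : t * (c * t) = c * t ^ 2 := by ring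
    simp [hM, Matrix.fromBlocks_mulVec, sumElim_dotProduct_sumElim,
      Matrix.mulVec, dotProduct, Fin.sum_univ_one, Finset.mul_sum, mul_add,
      Finset.sum_add_distrib]
    linarith [hsum, hct]
  have smul_quad : ∀ (x : Fin n → ℝ) (s : ℝ),
      (s • x) ⬝ᵥ Q *ᵥ (s • x) = (x ⬝ᵥ Q *ᵥ x) * s ^ 2 := by
    intro x s
    rw [Matrix.mulVec_smul, dotProduct_smul, smul_dotProduct]
    simp [smul_eq_mul]; ring
  have smul_lin : ∀ (x : Fin n → ℝ) (s : ℝ), ℓ ⬝ᵥ (s • x) = (ℓ ⬝ᵥ x) * s := by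
    intro x s
    rw [dotProduct_smul]; simp [smul_eq_mul]; ring
  constructor
  · intro h
    rw [Matrix.posSemidef_iff_dotProduct_mulVec]
    constructor
    · rw [hM, Matrix.IsHermitian, Matrix.fromBlocks_conjTranspose,
        Matrix.conjTranspose_replicateCol, Matrix.conjTranspose_replicateRow]
      simp [star_trivial]
      exact ⟨hQ, by ext i j; rfl⟩
    · intro z
      have hz : z = Sum.elim (z ∘ Sum.inl) (fun _ => z (Sum.inr 0)) := by
        funext i
        cases i with
        | inl i => simp
        | inr i => have : i = 0 := Subsingleton.elim _ _; simp [this]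
      rw [show star z = z from rfl, hz, key]
      set x := z ∘ Sum.inl with hx
      set t := z (Sum.inr 0) with htdef
      rcases eq_or_ne t 0 with ht | ht
      · have e0 : x ⬝ᵥ Q *ᵥ x + 2 * (ℓ ⬝ᵥ x) * t + c * t ^ 2 = x ⬝ᵥ Q *ᵥ x := by
          rw [ht]; ring
        rw [e0]
        exact aux_leading_nonneg (a := x ⬝ᵥ Q *ᵥ x) (b := 2 * (ℓ ⬝ᵥ x)) (c := c)
          (fun s => by
            have h' := h (s • x)
            rw [smul_quad, smul_lin] at h'
            linarith)
      · have h' := h (t⁻¹ • x)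
        rw [smul_quad, smul_lin] at h'
        have ht2 : 0 < t ^ 2 := by positivity
        have hmul := mul_nonneg (le_of_lt ht2) h'
        calc (0:ℝ) ≤ t ^ 2 * ((x ⬝ᵥ Q *ᵥ x) * t⁻¹ ^ 2 + 2 * ((ℓ ⬝ᵥ x) * t⁻¹) + c) := hmul
          _ = x ⬝ᵥ Q *ᵥ x + 2 * (ℓ ⬝ᵥ x) * t + c * t ^ 2 := by
              field_simp
  · intro hpsd x
    have := hpsd.dotProduct_mulVec_nonneg (Sum.elim x (fun _ => 1))
    rw [show star (Sum.elim x (fun _ => (1:ℝ))) = Sum.elim x (fun _ => 1) from rfl,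
      key] at this
    linarith
end

section
/- Let A, B be symmetric (n+1)×(n+1) real matrices and W = span{A, B} inside the space of symmetric matrices with the trace inner product. Let π_W be the orthogonal projection onto W, and let C = {[x;1][x;1]ᵀ : x ∈ ℝⁿ}. Then π_W(C) is homogenization-convex in W, i.e., the closure of {τ·π_W(X) : τ ≥ 0, X ∈ C} is convex. -/
open Matrix

private lemma quad_smul {m : ℕ} (Y : Matrix (Fin m) (Fin m) ℝ) (c : ℝ) (w : Fin m → ℝ) :
    (c • w) ⬝ᵥ (Y *ᵥ (c • w)) = c ^ 2 * (w ⬝ᵥ (Y *ᵥ w)) := by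
  simp [Matrix.mulVec_smul, smul_dotProduct, dotProduct_smul, smul_eq_mul]
  ring

private lemma quad_sym {m : ℕ} (Y : Matrix (Fin m) (Fin m) ℝ) (hY : Y.IsSymm)
    (x y : Fin m → ℝ) : y ⬝ᵥ (Y *ᵥ x) = x ⬝ᵥ (Y *ᵥ y) := by
  rw [dotProduct_mulVec, ← Matrix.mulVec_transpose, hY.eq, dotProduct_comm]

private lemma quad_expand {m : ℕ} (Y : Matrix (Fin m) (Fin m) ℝ) (hY : Y.IsSymm)
    (α γ : ℝ) (x y : Fin m → ℝ) :
    (α • x + γ • y) ⬝ᵥ (Y *ᵥ (α • x + γ • y)) =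
      α ^ 2 * (x ⬝ᵥ (Y *ᵥ x)) + 2 * α * γ * (x ⬝ᵥ (Y *ᵥ y)) + γ ^ 2 * (y ⬝ᵥ (Y *ᵥ y)) := by
  simp [Matrix.mulVec_add, Matrix.mulVec_smul, dotProduct_add, add_dotProduct,
    smul_dotProduct, dotProduct_smul, smul_eq_mul, quad_sym Y hY x y]
  ring

private lemma quad_continuous {m : ℕ} (Y : Matrix (Fin m) (Fin m) ℝ) :
    Continuous fun w : Fin m → ℝ => w ⬝ᵥ (Y *ᵥ w) := by
  simp only [dotProduct, Matrix.mulVec]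
  exact continuous_finset_sum _ fun i _ =>
    (continuous_apply i).mul (continuous_finset_sum _ fun j _ =>
      continuous_const.mul (continuous_apply j))

private lemma dines_path {m : ℕ} (C D : Matrix (Fin m) (Fin m) ℝ) (hC : C.IsSymm)
    (x1 x2 : Fin m → ℝ) (s : ℝ) (hs : 0 < s)
    (h11 : x1 ⬝ᵥ (C *ᵥ x1) = s) (h12 : x2 ⬝ᵥ (C *ᵥ x2) = s)
    (h21 : x1 ⬝ᵥ (D *ᵥ x1) = 0) (h22 : x2 ⬝ᵥ (D *ᵥ x2) = s)
    (μ : ℝ) (hμ0 : 0 ≤ μ) (hμ1 : μ ≤ s) :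
    ∃ w : Fin m → ℝ, w ⬝ᵥ (C *ᵥ w) = s ∧ w ⬝ᵥ (D *ᵥ w) = μ := by
  set β := x1 ⬝ᵥ (C *ᵥ x2) with hβ
  set ε : ℝ := if 0 ≤ β then 1 else -1 with hε
  have hεβ : 0 ≤ ε * β := by
    rw [hε]; split <;> [simpa; nlinarith [lt_of_not_ge (by assumption : ¬ 0 ≤ β)]]
  have hε2 : ε ^ 2 = 1 := by rw [hε]; split <;> norm_num
  set u : ℝ → Fin m → ℝ := fun t => Real.sqrt (1 - t) • x1 + (ε * Real.sqrt t) • x2 with hu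
  have hucont : Continuous u := by
    apply Continuous.add
    · exact ((continuous_const.sub continuous_id).sqrt).smul continuous_const
    · exact (continuous_const.mul Real.continuous_sqrt).smul continuous_const
  have hqc : ∀ t ∈ Set.Icc (0:ℝ) 1,
      (u t) ⬝ᵥ (C *ᵥ (u t)) = s + 2 * (ε * β) * (Real.sqrt (1 - t) * Real.sqrt t) := by
    intro t ht
    rw [hu]
    rw [quad_expand C hC _ _ x1 x2, h11, h12, ← hβ]
    rw [Real.sq_sqrt (by linarith [ht.2]), mul_pow, Real.sq_sqrt ht.1, hε2]
    ring
  have hqcpos : ∀ t ∈ Set.Icc (0:ℝ) 1, s ≤ (u t) ⬝ᵥ (C *ᵥ (u t)) := by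
    intro t ht
    rw [hqc t ht]
    have h1 : 0 ≤ Real.sqrt (1 - t) * Real.sqrt t := by positivity
    nlinarith
  set h : ℝ → ℝ := fun t => ((u t) ⬝ᵥ (D *ᵥ (u t))) / ((u t) ⬝ᵥ (C *ᵥ (u t))) with hh
  have hcont : ContinuousOn h (Set.Icc 0 1) := by
    apply ContinuousOn.div
    · exact ((quad_continuous D).comp hucont).continuousOn
    · exact ((quad_continuous C).comp hucont).continuousOn
    · intro t ht; exact ne_of_gt (lt_of_lt_of_le hs (hqcpos t ht))
  have hu0 : u 0 = x1 := by simp [hu]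
  have hu1 : u 1 = ε • x2 := by simp [hu]
  have hh0 : h 0 = 0 := by simp [hh, hu0, h21]
  have hh1 : h 1 = 1 := by
    rw [hh]; simp only [hu1, quad_smul, hε2, h12, h22, one_mul]
    field_simp
  have hmem : μ / s ∈ Set.Icc (h 0) (h 1) := by
    rw [hh0, hh1]
    constructor
    · positivity
    · exact div_le_one_of_le₀ hμ1 hs.le
  obtain ⟨t, ht, hht⟩ := intermediate_value_Icc (by norm_num : (0:ℝ) ≤ 1) hcont hmem
  set φ := (u t) ⬝ᵥ (C *ᵥ (u t)) with hφ
  have hφpos : 0 < φ := lt_of_lt_of_le hs (hqcpos t ht)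
  refine ⟨Real.sqrt (s / φ) • u t, ?_, ?_⟩
  · rw [quad_smul, Real.sq_sqrt (by positivity), ← hφ]
    field_simp
  · rw [quad_smul, Real.sq_sqrt (by positivity)]
    have : (u t) ⬝ᵥ (D *ᵥ (u t)) = (μ / s) * φ := by
      have := hht
      rw [hh] at this
      field_simp at this ⊢
      rw [← hφ, div_eq_iff hφpos.ne'] at this
      linarith [this]
    rw [this]
    field_simp


/-- Let `A, B` be symmetric `(n+1)×(n+1)` matrices, `W = span {A, B}` with the trace
inner product, and `P` the orthogonal projection onto `W` (characterized by `P X ∈ W`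
and `X - P X ⟂ W` in the trace inner product). Then the image under `P` of
`C = {[x;1][x;1]ᵀ : x ∈ ℝⁿ}` is homogenization-convex: the closure of its
homogeneous hull is convex. -/
theorem projected_rank_one_set_homogenizationConvex {n : ℕ}
    (A B : Matrix (Fin (n + 1)) (Fin (n + 1)) ℝ) (hA : A.IsSymm) (hB : B.IsSymm)
    (P : Matrix (Fin (n + 1)) (Fin (n + 1)) ℝ → Matrix (Fin (n + 1)) (Fin (n + 1)) ℝ)
    (hPmem : ∀ X, P X ∈ Submodule.span ℝ ({A, B} : Set (Matrix (Fin (n + 1)) (Fin (n + 1)) ℝ)))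
    (hPorth : ∀ X, ∀ Y ∈ Submodule.span ℝ ({A, B} : Set (Matrix (Fin (n + 1)) (Fin (n + 1)) ℝ)),
      Matrix.trace ((X - P X)ᵀ * Y) = 0) :
    Convex ℝ (closure {Z : Matrix (Fin (n + 1)) (Fin (n + 1)) ℝ | ∃ τ : ℝ, 0 ≤ τ ∧
      ∃ x : Fin n → ℝ,
        Z = τ • P (Matrix.vecMulVec (Fin.snoc x 1) (Fin.snoc x 1))}) := by
  set V := Submodule.span ℝ ({A, B} : Set (Matrix (Fin (n + 1)) (Fin (n + 1)) ℝ)) with hV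
  -- step 1: separation inside V
  have hzero : ∀ Z ∈ V, (∀ Y ∈ V, Matrix.trace (Zᵀ * Y) = 0) → Z = 0 := by
    intro Z hZ hZY
    have h := hZY Z hZ
    ext i j
    have hsum : ∑ j, ∑ i, Z i j * Z i j = 0 := by
      simpa [Matrix.trace, Matrix.mul_apply, Matrix.diag] using h
    have h2 := (Finset.sum_eq_zero_iff_of_nonneg
      (fun j _ => Finset.sum_nonneg (fun i _ => mul_self_nonneg _))).mp hsum
    have h3 := (Finset.sum_eq_zero_iff_of_nonneg
      (fun i _ => mul_self_nonneg _)).mp (h2 j (Finset.mem_univ j)) i (Finset.mem_univ i)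
    simpa [mul_self_eq_zero] using h3
  have hspanAB : ∀ Z, Matrix.trace (Zᵀ * A) = 0 → Matrix.trace (Zᵀ * B) = 0 →
      ∀ Y ∈ V, Matrix.trace (Zᵀ * Y) = 0 := by
    intro Z hZA hZB Y hY
    induction hY using Submodule.span_induction with
    | mem Y hY => rcases hY with h | h <;> subst h <;> assumption
    | zero => simp
    | add Y₁ Y₂ _ _ h₁ h₂ => rw [Matrix.mul_add, Matrix.trace_add, h₁, h₂, add_zero]
    | smul c Y _ h => rw [Matrix.mul_smul, Matrix.trace_smul, h, smul_zero]
  have hsep : ∀ Z ∈ V, Matrix.trace (Zᵀ * A) = 0 → Matrix.trace (Zᵀ * B) = 0 → Z = 0 :=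
    fun Z hZ hZA hZB => hzero Z hZ (hspanAB Z hZA hZB)
  have hAV : A ∈ V := Submodule.subset_span (by simp)
  have hBV : B ∈ V := Submodule.subset_span (by simp)
  -- step 2: P is linear
  have hPadd : ∀ X Y, P (X + Y) = P X + P Y := by
    intro X Y
    have hmem : P (X + Y) - P X - P Y ∈ V := sub_mem (sub_mem (hPmem _) (hPmem _)) (hPmem _)
    have hz : ∀ Y' ∈ V, Matrix.trace ((P (X + Y) - P X - P Y)ᵀ * Y') = 0 := by
      intro Y' hY'
      have h1 := hPorth (X + Y) Y' hY'
      have h2 := hPorth X Y' hY'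
      have h3 := hPorth Y Y' hY'
      have he : P (X + Y) - P X - P Y = (X - P X) + (Y - P Y) - (X + Y - P (X + Y)) := by abel
      rw [he, Matrix.transpose_sub, Matrix.transpose_add, Matrix.sub_mul, Matrix.add_mul,
        Matrix.trace_sub, Matrix.trace_add, h1, h2, h3]
      ring
    have := hzero _ hmem hz
    have : P (X + Y) - P X - P Y = 0 := this
    linear_combination (norm := abel) this
  have hPsmul : ∀ (c : ℝ) X, P (c • X) = c • P X := by
    intro c X
    have hmem : P (c • X) - c • P X ∈ V := sub_mem (hPmem _) (Submodule.smul_mem _ _ (hPmem _))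
    have hz : ∀ Y' ∈ V, Matrix.trace ((P (c • X) - c • P X)ᵀ * Y') = 0 := by
      intro Y' hY'
      have h1 := hPorth (c • X) Y' hY'
      have h2 := hPorth X Y' hY'
      have he : P (c • X) - c • P X = c • (X - P X) - (c • X - P (c • X)) := by
        rw [smul_sub]; abel
      rw [he, Matrix.transpose_sub, Matrix.transpose_smul, Matrix.sub_mul, Matrix.smul_mul,
        Matrix.trace_sub, Matrix.trace_smul, h1, h2, smul_zero, sub_zero]
    have : P (c • X) - c • P X = 0 := hzero _ hmem hz
    linear_combination (norm := abel) this
  have hPcont : Continuous P := by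
    let Pl : Matrix (Fin (n + 1)) (Fin (n + 1)) ℝ →ₗ[ℝ] Matrix (Fin (n + 1)) (Fin (n + 1)) ℝ :=
      { toFun := P, map_add' := hPadd, map_smul' := hPsmul }
    exact Pl.continuous_of_finiteDimensional
  -- setup q
  set q : (Fin (n + 1) → ℝ) → Matrix (Fin (n + 1)) (Fin (n + 1)) ℝ :=
    fun w => P (Matrix.vecMulVec w w) with hq
  have hqV : ∀ w, q w ∈ V := fun w => hPmem _
  have hqcont : Continuous q := by
    apply hPcont.comp
    apply continuous_pi; intro i
    apply continuous_pi; intro j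
    exact (continuous_apply i).mul (continuous_apply j)
  have hqsmul : ∀ (c : ℝ) w, q (c • w) = (c ^ 2) • q w := by
    intro c w
    have : Matrix.vecMulVec (c • w) (c • w) = (c ^ 2) • Matrix.vecMulVec w w := by
      ext i j; simp [Matrix.vecMulVec]; ring
    rw [hq]; simp only [this, hPsmul]
  have hkey : ∀ w, ∀ Y ∈ V, Matrix.trace ((q w)ᵀ * Y) = w ⬝ᵥ (Y *ᵥ w) := by
    intro w Y hY
    have h0 := hPorth (Matrix.vecMulVec w w) Y hY
    rw [Matrix.transpose_sub, Matrix.sub_mul, Matrix.trace_sub, sub_eq_zero] at h0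
    rw [hq]
    rw [← h0]
    simp only [Matrix.trace, Matrix.diag, Matrix.mul_apply, Matrix.transpose_apply,
      Matrix.vecMulVec_apply, dotProduct, Matrix.mulVec, Finset.mul_sum]
    rw [Finset.sum_comm]
    exact Finset.sum_congr rfl fun i _ => Finset.sum_congr rfl fun j _ => by ring
  -- cone property
  have hcone : ∀ (c : ℝ), 0 ≤ c → ∀ w, c • q w ∈ Set.range q := by
    intro c hc w
    exact ⟨Real.sqrt c • w, by rw [hqsmul, Real.sq_sqrt hc]⟩
  -- Dines: range q is convex
  have heqV : ∀ Z1 ∈ V, ∀ Z2 ∈ V, Matrix.trace (Z1ᵀ * A) = Matrix.trace (Z2ᵀ * A) →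
      Matrix.trace (Z1ᵀ * B) = Matrix.trace (Z2ᵀ * B) → Z1 = Z2 := by
    intro Z1 h1 Z2 h2 hEA hEB
    have h0 : Z1 - Z2 = 0 := by
      refine hsep (Z1 - Z2) (sub_mem h1 h2) ?_ ?_
      · rw [Matrix.transpose_sub, Matrix.sub_mul, Matrix.trace_sub, hEA, sub_self]
      · rw [Matrix.transpose_sub, Matrix.sub_mul, Matrix.trace_sub, hEB, sub_self]
    linear_combination (norm := abel) h0
  have htrcomb : ∀ (c d : ℝ) (Z1 Z2 : Matrix (Fin (n + 1)) (Fin (n + 1)) ℝ) (Y : Matrix (Fin (n + 1)) (Fin (n + 1)) ℝ),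
      Matrix.trace ((c • Z1 + d • Z2)ᵀ * Y) = c * Matrix.trace (Z1ᵀ * Y) + d * Matrix.trace (Z2ᵀ * Y) := by
    intro c d Z1 Z2 Y
    rw [Matrix.transpose_add, Matrix.transpose_smul, Matrix.transpose_smul, Matrix.add_mul,
      Matrix.smul_mul, Matrix.smul_mul, Matrix.trace_add, Matrix.trace_smul, Matrix.trace_smul]
    simp [smul_eq_mul]
  have hquadlin : ∀ (c d : ℝ) (x : Fin (n + 1) → ℝ),
      x ⬝ᵥ ((c • A + d • B) *ᵥ x) = c * (x ⬝ᵥ (A *ᵥ x)) + d * (x ⬝ᵥ (B *ᵥ x)) := by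
    intro c d x
    simp [Matrix.add_mulVec, Matrix.smul_mulVec, dotProduct_add, dotProduct_smul,
      smul_eq_mul]
  have hsymm_comb : ∀ (c d : ℝ), (c • A + d • B).IsSymm := by
    intro c d
    rw [Matrix.IsSymm, Matrix.transpose_add, Matrix.transpose_smul, Matrix.transpose_smul,
      hA.eq, hB.eq]
  have hconv : Convex ℝ (Set.range q) := by
    rintro _ ⟨x1, rfl⟩ _ ⟨x2, rfl⟩ a b ha hb hab
    have ha' : a = 1 - b := by linarith
    subst ha'
    have hb1' : b ≤ 1 := by linarith
    set a1 := x1 ⬝ᵥ (A *ᵥ x1) with ha1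
    set b1 := x1 ⬝ᵥ (B *ᵥ x1) with hb1
    set a2 := x2 ⬝ᵥ (A *ᵥ x2) with ha2
    set b2 := x2 ⬝ᵥ (B *ᵥ x2) with hb2
    by_cases hΔ : a1 * b2 - a2 * b1 = 0
    · -- collinear case
      by_cases h1 : q x1 = 0
      · rw [h1, smul_zero, zero_add]; exact hcone b hb x2
      · have hp1 : a1 ≠ 0 ∨ b1 ≠ 0 := by
          by_contra hcon
          push_neg at hcon
          refine h1 (hsep _ (hqV x1) ?_ ?_)
          · rw [hkey x1 A hAV, ← ha1]; exact hcon.1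
          · rw [hkey x1 B hBV, ← hb1]; exact hcon.2
        obtain ⟨c, hc1, hc2⟩ : ∃ c : ℝ, a2 = c * a1 ∧ b2 = c * b1 := by
          rcases hp1 with h | h
          · refine ⟨a2 / a1, by field_simp, ?_⟩
            field_simp
            first
            | linear_combination 2 * hΔ
            | linear_combination -2 * hΔ
            | linear_combination hΔ
            | linear_combination -hΔ
          · refine ⟨b2 / b1, ?_, by field_simp⟩
            field_simp
            first
            | linear_combination 2 * hΔ
            | linear_combination -2 * hΔ
            | linear_combination hΔ
            | linear_combination -hΔ
        have hqx2 : q x2 = c • q x1 := by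
          refine heqV _ (hqV x2) _ (Submodule.smul_mem _ _ (hqV x1)) ?_ ?_
          · rw [hkey x2 A hAV, Matrix.transpose_smul, Matrix.smul_mul, Matrix.trace_smul,
              hkey x1 A hAV, smul_eq_mul, ← ha1, ← ha2, hc1]
          · rw [hkey x2 B hBV, Matrix.transpose_smul, Matrix.smul_mul, Matrix.trace_smul,
              hkey x1 B hBV, smul_eq_mul, ← hb1, ← hb2, hc2]
        rw [hqx2, smul_smul, ← add_smul]
        rcases le_or_gt 0 ((1 - b) + b * c) with hge | hlt
        · exact hcone _ hge x1
        · have hcneg : c < 0 := by nlinarith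
          have hrw : ((1 - b) + b * c) • q x1 = (((1 - b) + b * c) / c) • q x2 := by
            rw [hqx2, smul_smul]
            congr 1
            exact (div_mul_cancel₀ _ hcneg.ne).symm
          rw [hrw]
          exact hcone _ (div_nonneg_of_nonpos hlt.le hcneg.le) x2
    · -- independent case : Dines' path argument
      set Δ := a1 * b2 - a2 * b1 with hΔdef
      set σ : ℝ := if 0 < Δ then 1 else -1 with hσ
      have hσ2 : σ * σ = 1 := by rw [hσ]; split <;> norm_num
      have hsΔ : 0 < σ * Δ := by
        rcases lt_trichotomy Δ 0 with h | h | h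
        · rw [hσ, if_neg (by linarith)]; nlinarith
        · exact absurd h hΔ
        · rw [hσ, if_pos h]; nlinarith
      set C := (σ * (b2 - b1)) • A + (σ * (a1 - a2)) • B with hCdef
      set D := (σ * (-b1)) • A + (σ * a1) • B with hDdef
      have hQC1 : x1 ⬝ᵥ (C *ᵥ x1) = σ * Δ := by
        rw [hCdef, hquadlin, ← ha1, ← hb1, hΔdef]; ring
      have hQC2 : x2 ⬝ᵥ (C *ᵥ x2) = σ * Δ := by
        rw [hCdef, hquadlin, ← ha2, ← hb2, hΔdef]; ring
      have hQD1 : x1 ⬝ᵥ (D *ᵥ x1) = 0 := by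
        rw [hDdef, hquadlin, ← ha1, ← hb1]; ring
      have hQD2 : x2 ⬝ᵥ (D *ᵥ x2) = σ * Δ := by
        rw [hDdef, hquadlin, ← ha2, ← hb2, hΔdef]; ring
      obtain ⟨w, hwC, hwD⟩ := dines_path C D (hsymm_comb _ _) x1 x2 (σ * Δ) hsΔ
        hQC1 hQC2 hQD1 hQD2 (b * (σ * Δ)) (by nlinarith) (by nlinarith)
      set α := w ⬝ᵥ (A *ᵥ w) with hα
      set βv := w ⬝ᵥ (B *ᵥ w) with hβv
      rw [hCdef, hquadlin, ← hα, ← hβv] at hwC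
      rw [hDdef, hquadlin, ← hα, ← hβv] at hwD
      have eq1 : (b2 - b1) * α + (a1 - a2) * βv = Δ := by
        linear_combination σ * hwC - ((b2 - b1) * α + (a1 - a2) * βv - Δ) * hσ2
      have eq2 : (-b1) * α + a1 * βv = b * Δ := by
        linear_combination σ * hwD - ((-b1) * α + a1 * βv - b * Δ) * hσ2
      have hαval : α = (1 - b) * a1 + b * a2 := by
        have h := mul_left_cancel₀ hΔ (show Δ * α = Δ * ((1 - b) * a1 + b * a2) by
          linear_combination a1 * eq1 - (a1 - a2) * eq2)
        exact h
      have hβval : βv = (1 - b) * b1 + b * b2 := by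
        have h := mul_left_cancel₀ hΔ (show Δ * βv = Δ * ((1 - b) * b1 + b * b2) by
          linear_combination b1 * eq1 + (b2 - b1) * eq2)
        exact h
      refine ⟨w, ?_⟩
      refine heqV _ (hqV w) _
        (add_mem (Submodule.smul_mem _ _ (hqV x1)) (Submodule.smul_mem _ _ (hqV x2))) ?_ ?_
      · rw [hkey w A hAV, htrcomb, hkey x1 A hAV, hkey x2 A hAV, ← hα, ← ha1, ← ha2, hαval]
      · rw [hkey w B hBV, htrcomb, hkey x1 B hBV, hkey x2 B hBV, ← hβv, ← hb1, ← hb2, hβval]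
  -- closure identification
  have hSrange : {Z : Matrix (Fin (n + 1)) (Fin (n + 1)) ℝ | ∃ τ : ℝ, 0 ≤ τ ∧
      ∃ x : Fin n → ℝ, Z = τ • P (Matrix.vecMulVec (Fin.snoc x 1) (Fin.snoc x 1))}
      ⊆ Set.range q := by
    rintro Z ⟨τ, hτ, x, rfl⟩
    exact hcone τ hτ _
  have hrangeS : Set.range q ⊆ closure {Z : Matrix (Fin (n + 1)) (Fin (n + 1)) ℝ | ∃ τ : ℝ, 0 ≤ τ ∧
      ∃ x : Fin n → ℝ, Z = τ • P (Matrix.vecMulVec (Fin.snoc x 1) (Fin.snoc x 1))} := by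
    have hS' : ∀ v : Fin (n + 1) → ℝ, v (Fin.last n) ≠ 0 →
        q v ∈ {Z : Matrix (Fin (n + 1)) (Fin (n + 1)) ℝ | ∃ τ : ℝ, 0 ≤ τ ∧
          ∃ x : Fin n → ℝ, Z = τ • P (Matrix.vecMulVec (Fin.snoc x 1) (Fin.snoc x 1))} := by
      intro v hv
      set t := v (Fin.last n) with htdef
      have hvdec : v = t • (Fin.snoc (t⁻¹ • Fin.init v) 1 : Fin (n + 1) → ℝ) := by
        ext i
        refine Fin.lastCases ?_ ?_ i
        · simp [Fin.snoc_last, htdef]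
        · intro i
          simp [Fin.snoc_castSucc, Fin.init]
          field_simp
      refine ⟨t ^ 2, sq_nonneg t, t⁻¹ • Fin.init v, ?_⟩
      conv_lhs => rw [hvdec]
      rw [hqsmul]
    rintro Z ⟨w, rfl⟩
    by_cases hlast : w (Fin.last n) = 0
    · set wk : ℕ → (Fin (n + 1) → ℝ) :=
        fun k => Fin.snoc (Fin.init w) (1 / ((k : ℝ) + 1)) with hwk
      have hwtend : Filter.Tendsto wk Filter.atTop (nhds w) := by
        rw [tendsto_pi_nhds]
        intro i
        refine Fin.lastCases ?_ ?_ i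
        · simp only [hwk, Fin.snoc_last, hlast]
          exact tendsto_one_div_add_atTop_nhds_zero_nat
        · intro i
          simp only [hwk, Fin.snoc_castSucc]
          exact tendsto_const_nhds
      refine mem_closure_of_tendsto ((hqcont.tendsto w).comp hwtend) ?_
      filter_upwards with k
      apply hS'
      simp only [hwk, Fin.snoc_last]
      positivity
    · exact subset_closure (hS' w hlast)
  have hclos : closure {Z : Matrix (Fin (n + 1)) (Fin (n + 1)) ℝ | ∃ τ : ℝ, 0 ≤ τ ∧
      ∃ x : Fin n → ℝ, Z = τ • P (Matrix.vecMulVec (Fin.snoc x 1) (Fin.snoc x 1))}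
      = closure (Set.range q) :=
    subset_antisymm (closure_mono hSrange) (closure_minimal hrangeS isClosed_closure)
  rw [hclos]
  exact hconv.closure
end

section
/- (S-Lemma in Hilbert space) Let V be a real Hilbert space and g, h : V → ℝ continuous quadratic functions g(x) = c_g + 2⟨v_g, x⟩ + ⟨x, M_g x⟩ and h(x) = c_h + 2⟨v_h, x⟩ + ⟨x, M_h x⟩ with M_g, M_h self-adjoint bounded operators, v_g, v_h ∈ V, c_g, c_h ∈ ℝ. Suppose h(x₀) > 0 for some x₀ ∈ V. Then g(x) ≥ 0 for all x ∈ V with h(x) ≥ 0 if and only if there exists ξ ≥ 0 such that g(x) − ξh(x) ≥ 0 for all x ∈ V. -/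
open scoped RealInnerProductSpace
namespace SLemmaAux

variable {V : Type*} [NormedAddCommGroup V] [InnerProductSpace ℝ V]

noncomputable def qf (M : V →L[ℝ] V) (v : V) (c : ℝ) (z : V × ℝ) : ℝ :=
  c * z.2 ^ 2 + 2 * z.2 * ⟪v, z.1⟫ + ⟪z.1, M z.1⟫

noncomputable def bf (M : V →L[ℝ] V) (v : V) (c : ℝ) (z w : V × ℝ) : ℝ :=
  c * z.2 * w.2 + z.2 * ⟪v, w.1⟫ + w.2 * ⟪v, z.1⟫ + ⟪z.1, M w.1⟫

lemma qf_expand (M : V →L[ℝ] V) (hM : ∀ x y : V, ⟪M x, y⟫ = ⟪x, M y⟫)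
    (v : V) (c : ℝ) (a b : ℝ) (z w : V × ℝ) :
    qf M v c (a • z + b • w)
      = a ^ 2 * qf M v c z + 2 * a * b * bf M v c z w + b ^ 2 * qf M v c w := by
  have hsym : ⟪w.1, M z.1⟫ = ⟪z.1, M w.1⟫ := by
    rw [real_inner_comm, hM]
  simp only [qf, bf, Prod.fst_add, Prod.snd_add, Prod.smul_fst, Prod.smul_snd,
    smul_eq_mul, inner_add_left, inner_add_right, real_inner_smul_left,
    real_inner_smul_right, map_add, map_smul]
  rw [hsym]
  ring


-- half-angle: given (C,S) on unit circle, find (a,b) with a^2-b^2=C, 2ab=S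
lemma half_angle (C S : ℝ) (h : C ^ 2 + S ^ 2 = 1) :
    ∃ a b : ℝ, a ^ 2 - b ^ 2 = C ∧ 2 * a * b = S := by
  have hC1 : C ≤ 1 := by nlinarith
  have hC2 : -1 ≤ C := by nlinarith
  refine ⟨Real.sqrt ((1 + C) / 2),
    if 0 ≤ S then Real.sqrt ((1 - C) / 2) else -Real.sqrt ((1 - C) / 2), ?_, ?_⟩
  · have h1 : Real.sqrt ((1 + C) / 2) ^ 2 = (1 + C) / 2 :=
      Real.sq_sqrt (by linarith)
    have h2 : Real.sqrt ((1 - C) / 2) ^ 2 = (1 - C) / 2 :=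
      Real.sq_sqrt (by linarith)
    split <;> [skip; rw [neg_pow]] <;> rw [h1, h2] <;> ring
  · have key : Real.sqrt ((1 + C) / 2) * Real.sqrt ((1 - C) / 2) = |S| / 2 := by
      rw [← Real.sqrt_mul (by linarith)]
      have : (1 + C) / 2 * ((1 - C) / 2) = (S / 2) ^ 2 := by nlinarith
      rw [this, Real.sqrt_sq_eq_abs, abs_div]
      simp
    split
    · next hS => rw [show (2:ℝ) * Real.sqrt ((1 + C) / 2) * Real.sqrt ((1 - C) / 2)
          = 2 * (Real.sqrt ((1 + C) / 2) * Real.sqrt ((1 - C) / 2)) by ring, key,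
          abs_of_nonneg hS]; ring
    · next hS =>
      rw [show (2:ℝ) * Real.sqrt ((1 + C) / 2) * -Real.sqrt ((1 - C) / 2)
          = -(2 * (Real.sqrt ((1 + C) / 2) * Real.sqrt ((1 - C) / 2))) by ring, key,
        abs_of_neg (lt_of_not_ge hS)]; ring



lemma unit_perp (A B : ℝ) : ∃ C S : ℝ, C ^ 2 + S ^ 2 = 1 ∧ C * A + S * B = 0 := by
  by_cases h : A = 0 ∧ B = 0
  · exact ⟨1, 0, by norm_num, by simp [h.1, h.2]⟩
  · have hr : 0 < A ^ 2 + B ^ 2 := by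
      rcases not_and_or.mp h with h | h <;> positivity
    have hr' : 0 < Real.sqrt (A ^ 2 + B ^ 2) := Real.sqrt_pos.mpr hr
    refine ⟨-B / Real.sqrt (A ^ 2 + B ^ 2), A / Real.sqrt (A ^ 2 + B ^ 2), ?_, by ring⟩
    have : Real.sqrt (A ^ 2 + B ^ 2) ^ 2 = A ^ 2 + B ^ 2 := Real.sq_sqrt hr.le
    field_simp
    linarith [this]


variable {V : Type*} [NormedAddCommGroup V] [InnerProductSpace ℝ V]
variable (Mg Mh : V →L[ℝ] V) (vg vh : V) (cg ch : ℝ)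

noncomputable def Dset : Set (ℝ × ℝ) :=
  {p | ∃ z : V × ℝ, p = (qf Mg vg cg z, qf Mh vh ch z)}

lemma qf_smul (M : V →L[ℝ] V) (hM : ∀ x y : V, ⟪M x, y⟫ = ⟪x, M y⟫)
    (v : V) (c : ℝ) (a : ℝ) (z : V × ℝ) :
    qf M v c (a • z) = a ^ 2 * qf M v c z := by
  have := qf_expand M hM v c a 0 z z
  simpa using this

lemma cone_mem (hMg' : ∀ x y : V, ⟪Mg x, y⟫ = ⟪x, Mg y⟫)
    (hMh' : ∀ x y : V, ⟪Mh x, y⟫ = ⟪x, Mh y⟫)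
    {p : ℝ × ℝ} (hp : p ∈ Dset Mg Mh vg vh cg ch) {t : ℝ} (ht : 0 ≤ t) :
    t • p ∈ Dset Mg Mh vg vh cg ch := by
  obtain ⟨z, rfl⟩ := hp
  refine ⟨Real.sqrt t • z, ?_⟩
  have hs : Real.sqrt t ^ 2 = t := Real.sq_sqrt ht
  rw [qf_smul Mg hMg' vg cg, qf_smul Mh hMh' vh ch, hs]
  simp [Prod.smul_def, smul_eq_mul]

lemma zero_mem : (0 : ℝ × ℝ) ∈ Dset Mg Mh vg vh cg ch := by
  refine ⟨0, ?_⟩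
  simp [qf, Prod.ext_iff]

lemma mid_mem (hMg' : ∀ x y : V, ⟪Mg x, y⟫ = ⟪x, Mg y⟫)
    (hMh' : ∀ x y : V, ⟪Mh x, y⟫ = ⟪x, Mh y⟫) (z w : V × ℝ) :
    ((qf Mg vg cg z + qf Mg vg cg w) / 2, (qf Mh vh ch z + qf Mh vh ch w) / 2)
      ∈ Dset Mg Mh vg vh cg ch := by
  set c1 := (qf Mg vg cg z + qf Mg vg cg w) / 2 with hc1
  set c2 := (qf Mh vh ch z + qf Mh vh ch w) / 2 with hc2
  by_cases hc : c1 = 0 ∧ c2 = 0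
  · rw [hc.1, hc.2]; exact zero_mem Mg Mh vg vh cg ch
  obtain ⟨C, S, hCS, hperp⟩ := unit_perp
    (c1 * ((qf Mh vh ch z - qf Mh vh ch w) / 2) - c2 * ((qf Mg vg cg z - qf Mg vg cg w) / 2))
    (c1 * bf Mh vh ch z w - c2 * bf Mg vg cg z w)
  obtain ⟨a, b, hab1, hab2⟩ := half_angle C S hCS
  have hsumsq : (a ^ 2 + b ^ 2) ^ 2 = 1 := by
    linear_combination (a ^ 2 - b ^ 2 + C) * hab1 + (2 * a * b + S) * hab2 + hCS
  have hsum : a ^ 2 + b ^ 2 = 1 := by nlinarith [sq_nonneg a, sq_nonneg b]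
  have ha2 : a ^ 2 = (1 + C) / 2 := by linarith
  have hb2' : b ^ 2 = (1 - C) / 2 := by linarith
  have he1g : qf Mg vg cg (a • z + b • w)
      = c1 + C * ((qf Mg vg cg z - qf Mg vg cg w) / 2) + S * bf Mg vg cg z w := by
    rw [qf_expand Mg hMg' vg cg, hc1]
    linear_combination qf Mg vg cg z * ha2 + qf Mg vg cg w * hb2' + bf Mg vg cg z w * hab2
  have he1h : qf Mh vh ch (a • z + b • w)
      = c2 + C * ((qf Mh vh ch z - qf Mh vh ch w) / 2) + S * bf Mh vh ch z w := by
    rw [qf_expand Mh hMh' vh ch, hc2]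
    linear_combination qf Mh vh ch z * ha2 + qf Mh vh ch w * hb2' + bf Mh vh ch z w * hab2
  have he2g : qf Mg vg cg ((-b) • z + a • w)
      = 2 * c1 - (c1 + C * ((qf Mg vg cg z - qf Mg vg cg w) / 2) + S * bf Mg vg cg z w) := by
    rw [qf_expand Mg hMg' vg cg, hc1]
    linear_combination qf Mg vg cg z * hb2' + qf Mg vg cg w * ha2 - bf Mg vg cg z w * hab2
  have he2h : qf Mh vh ch ((-b) • z + a • w)
      = 2 * c2 - (c2 + C * ((qf Mh vh ch z - qf Mh vh ch w) / 2) + S * bf Mh vh ch z w) := by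
    rw [qf_expand Mh hMh' vh ch, hc2]
    linear_combination qf Mh vh ch z * hb2' + qf Mh vh ch w * ha2 - bf Mh vh ch z w * hab2
  set e1 := c1 + C * ((qf Mg vg cg z - qf Mg vg cg w) / 2) + S * bf Mg vg cg z w with he1
  set e2 := c2 + C * ((qf Mh vh ch z - qf Mh vh ch w) / 2) + S * bf Mh vh ch z w with he2
  have hcross : c1 * e2 - c2 * e1 = 0 := by
    rw [he1, he2]; linear_combination hperp
  have hcpos : 0 < c1 ^ 2 + c2 ^ 2 := by
    rcases not_and_or.mp hc with h | h
    · positivity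
    · positivity
  set s := (c1 * e1 + c2 * e2) / (c1 ^ 2 + c2 ^ 2) with hs
  have hse1 : e1 = s * c1 := by
    rw [hs, div_mul_eq_mul_div, eq_div_iff hcpos.ne']
    linear_combination (-c2) * hcross
  have hse2 : e2 = s * c2 := by
    rw [hs, div_mul_eq_mul_div, eq_div_iff hcpos.ne']
    linear_combination c1 * hcross
  rcases lt_or_ge 0 s with hspos | hsnp
  · have hmem : ((e1, e2) : ℝ × ℝ) ∈ Dset Mg Mh vg vh cg ch :=
      ⟨a • z + b • w, by rw [he1g, he1h]⟩
    have hc' := cone_mem Mg Mh vg vh cg ch hMg' hMh' hmem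
      (t := 1 / s) (by positivity)
    have heq : (1 / s) • ((e1, e2) : ℝ × ℝ) = (c1, c2) := by
      rw [Prod.smul_def, hse1, hse2]
      simp only [smul_eq_mul, Prod.mk.injEq]
      constructor <;> (field_simp)
    rwa [heq] at hc'
  · have hmem : ((2 * c1 - e1, 2 * c2 - e2) : ℝ × ℝ) ∈ Dset Mg Mh vg vh cg ch :=
      ⟨(-b) • z + a • w, by rw [he2g, he2h]⟩
    have h2s : 0 < 2 - s := by linarith
    have hc' := cone_mem Mg Mh vg vh cg ch hMg' hMh' hmem
      (t := 1 / (2 - s)) (by positivity)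
    have heq : (1 / (2 - s)) • ((2 * c1 - e1, 2 * c2 - e2) : ℝ × ℝ) = (c1, c2) := by
      rw [Prod.smul_def, hse1, hse2]
      simp only [smul_eq_mul, Prod.mk.injEq]
      constructor <;> (field_simp)
    rwa [heq] at hc'

lemma convex_Dset (hMg' : ∀ x y : V, ⟪Mg x, y⟫ = ⟪x, Mg y⟫)
    (hMh' : ∀ x y : V, ⟪Mh x, y⟫ = ⟪x, Mh y⟫) :
    Convex ℝ (Dset Mg Mh vg vh cg ch) := by
  have hadd : ∀ p q : ℝ × ℝ, p ∈ Dset Mg Mh vg vh cg ch →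
      q ∈ Dset Mg Mh vg vh cg ch → p + q ∈ Dset Mg Mh vg vh cg ch := by
    rintro p q ⟨z, rfl⟩ ⟨w, rfl⟩
    have := cone_mem Mg Mh vg vh cg ch hMg' hMh'
      (mid_mem Mg Mh vg vh cg ch hMg' hMh' z w) (t := 2) (by norm_num)
    convert this using 1
    rw [Prod.smul_def, Prod.ext_iff]
    simp only [smul_eq_mul, Prod.fst_add, Prod.snd_add]
    constructor <;> ring
  intro p hp q hq a b ha hb _
  exact hadd _ _ (cone_mem Mg Mh vg vh cg ch hMg' hMh' hp ha)
    (cone_mem Mg Mh vg vh cg ch hMg' hMh' hq hb)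

open Filter in
lemma homog_case {V : Type*} [NormedAddCommGroup V] [InnerProductSpace ℝ V]
    (Mg Mh : V →L[ℝ] V) (vg vh : V) (cg ch : ℝ)
    (hcop : ∀ x : V, 0 ≤ ch + 2 * ⟪vh, x⟫ + ⟪x, Mh x⟫ →
        0 ≤ cg + 2 * ⟪vg, x⟫ + ⟪x, Mg x⟫)
    (x : V) (hx : 0 < ⟪x, Mh x⟫) : 0 ≤ ⟪x, Mg x⟫ := by
  set ah := (⟪x, Mh x⟫ : ℝ)
  set bh := (⟪vh, x⟫ : ℝ)
  set ag := (⟪x, Mg x⟫ : ℝ)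
  set bg := (⟪vg, x⟫ : ℝ)
  have hexp : ∀ (c : ℝ) (v : V) (M : V →L[ℝ] V) (s : ℝ),
      c + 2 * ⟪v, s • x⟫ + ⟪s • x, M (s • x)⟫
        = c + 2 * s * ⟪v, x⟫ + s ^ 2 * ⟪x, M x⟫ := by
    intro c v M s
    rw [real_inner_smul_right, map_smul, real_inner_smul_left, real_inner_smul_right]
    ring
  have hth : Tendsto (fun s : ℝ => ch / s ^ 2 + 2 * bh / s + ah) atTop (nhds ah) := by
    have h1 : Tendsto (fun s : ℝ => ch / s ^ 2) atTop (nhds 0) :=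
      tendsto_const_nhds.div_atTop (tendsto_pow_atTop two_ne_zero)
    have h2 : Tendsto (fun s : ℝ => 2 * bh / s) atTop (nhds 0) :=
      tendsto_const_nhds.div_atTop tendsto_id
    simpa using (h1.add h2).add (tendsto_const_nhds (x := ah))
  have htg : Tendsto (fun s : ℝ => cg / s ^ 2 + 2 * bg / s + ag) atTop (nhds ag) := by
    have h1 : Tendsto (fun s : ℝ => cg / s ^ 2) atTop (nhds 0) :=
      tendsto_const_nhds.div_atTop (tendsto_pow_atTop two_ne_zero)
    have h2 : Tendsto (fun s : ℝ => 2 * bg / s) atTop (nhds 0) :=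
      tendsto_const_nhds.div_atTop tendsto_id
    simpa using (h1.add h2).add (tendsto_const_nhds (x := ag))
  have hev : ∀ᶠ s : ℝ in atTop, 0 ≤ cg / s ^ 2 + 2 * bg / s + ag := by
    filter_upwards [hth.eventually (eventually_gt_nhds hx), eventually_gt_atTop (0 : ℝ)]
      with s hs hs0
    have hs2 : (0:ℝ) < s ^ 2 := by positivity
    have hhpos : 0 ≤ ch + 2 * s * bh + s ^ 2 * ah := by
      have := mul_pos hs2 hs
      calc (0:ℝ) ≤ s ^ 2 * (ch / s ^ 2 + 2 * bh / s + ah) := this.le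
        _ = ch + 2 * s * bh + s ^ 2 * ah := by field_simp
    have hg := hcop (s • x)
    rw [hexp ch vh Mh s, hexp cg vg Mg s] at hg
    have := hg hhpos
    have heq : cg / s ^ 2 + 2 * bg / s + ag = (cg + 2 * s * bg + s ^ 2 * ag) / s ^ 2 := by
      field_simp
    rw [heq]
    positivity
  exact ge_of_tendsto htg hev

end SLemmaAux

/-- S-Lemma in a real Hilbert space: for continuous quadratic functions
`g x = c_g + 2⟨v_g, x⟩ + ⟨x, M_g x⟩` and `h x = c_h + 2⟨v_h, x⟩ + ⟨x, M_h x⟩` with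
`M_g, M_h` bounded self-adjoint, if `h x₀ > 0` for some `x₀`, then `g` is copositive
with `h` iff there exists `ξ ≥ 0` with `g - ξh ≥ 0` everywhere. -/
theorem s_lemma_hilbert {V : Type*} [NormedAddCommGroup V]
    [InnerProductSpace ℝ V] [CompleteSpace V]
    (Mg Mh : V →L[ℝ] V)
    (hMg : ∀ x y : V, (inner ℝ (Mg x) y : ℝ) = inner ℝ x (Mg y))
    (hMh : ∀ x y : V, (inner ℝ (Mh x) y : ℝ) = inner ℝ x (Mh y))
    (vg vh : V) (cg ch : ℝ)
    (x₀ : V) (hx₀ : 0 < ch + 2 * (inner ℝ vh x₀ : ℝ) + (inner ℝ x₀ (Mh x₀) : ℝ)) :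
    (∀ x : V, 0 ≤ ch + 2 * (inner ℝ vh x : ℝ) + (inner ℝ x (Mh x) : ℝ) →
        0 ≤ cg + 2 * (inner ℝ vg x : ℝ) + (inner ℝ x (Mg x) : ℝ)) ↔
      ∃ ξ : ℝ, 0 ≤ ξ ∧ ∀ x : V,
        0 ≤ (cg + 2 * (inner ℝ vg x : ℝ) + (inner ℝ x (Mg x) : ℝ))
            - ξ * (ch + 2 * (inner ℝ vh x : ℝ) + (inner ℝ x (Mh x) : ℝ)) := by
  constructor
  · intro hcop
    have hqf1 : ∀ (M : V →L[ℝ] V) (v : V) (c : ℝ) (x : V),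
        SLemmaAux.qf M v c (x, 1) = c + 2 * ⟪v, x⟫ + ⟪x, M x⟫ := by
      intro M v c x; simp [SLemmaAux.qf]
    -- key: the image avoids the open "bad" quadrant
    have key : ∀ z : V × ℝ, 0 < SLemmaAux.qf Mh vh ch z → 0 ≤ SLemmaAux.qf Mg vg cg z := by
      rintro ⟨x, t⟩ hz
      by_cases ht : t = 0
      · subst ht
        have hzh : 0 < (⟪x, Mh x⟫ : ℝ) := by simpa [SLemmaAux.qf] using hz
        have := SLemmaAux.homog_case Mg Mh vg vh cg ch hcop x hzh
        simpa [SLemmaAux.qf] using this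
      · have ht2 : (0:ℝ) < t ^ 2 := by positivity
        have hsmul : ∀ (M : V →L[ℝ] V), (∀ a b : V, ⟪M a, b⟫ = ⟪a, M b⟫) →
            ∀ (v : V) (c : ℝ),
            SLemmaAux.qf M v c (x, t) = t ^ 2 * SLemmaAux.qf M v c (t⁻¹ • x, 1) := by
          intro M hM v c
          have h1 : ((t⁻¹ • x, (1:ℝ)) : V × ℝ) = t⁻¹ • ((x, t) : V × ℝ) := by
            rw [Prod.ext_iff]
            exact ⟨rfl, (inv_mul_cancel₀ ht).symm⟩
          rw [h1, SLemmaAux.qf_smul M hM v c]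
          field_simp
        have hzh : 0 < SLemmaAux.qf Mh vh ch (t⁻¹ • x, 1) := by
          rw [hsmul Mh hMh vh ch] at hz
          by_contra hle
          push_neg at hle
          nlinarith
        have hg := hcop (t⁻¹ • x)
        rw [← hqf1 Mg vg cg, ← hqf1 Mh vh ch] at hg
        have := hg hzh.le
        rw [hsmul Mg hMg vg cg]
        positivity
    -- separation
    set D := SLemmaAux.Dset Mg Mh vg vh cg ch with hD
    have hDconv : Convex ℝ D := SLemmaAux.convex_Dset Mg Mh vg vh cg ch hMg hMh
    set C : Set (ℝ × ℝ) := Set.Iio (0:ℝ) ×ˢ Set.Ioi (0:ℝ) with hC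
    have hCconv : Convex ℝ C := (convex_Iio 0).prod (convex_Ioi 0)
    have hCopen : IsOpen C := (isOpen_Iio).prod (isOpen_Ioi)
    have hdisj : Disjoint C D := by
      rw [Set.disjoint_left]
      rintro p ⟨hp1, hp2⟩ ⟨z, rfl⟩
      exact absurd (key z hp2) (not_le.mpr hp1)
    obtain ⟨f, u, hfC, hfD⟩ := geometric_hahn_banach_open hCconv hCopen hDconv hdisj
    set p := f (1, 0) with hp
    set q := f (0, 1) with hq
    have hf : ∀ a b : ℝ, f (a, b) = a * p + b * q := by
      intro a b
      have : ((a, b) : ℝ × ℝ) = a • ((1,0) : ℝ × ℝ) + b • ((0,1) : ℝ × ℝ) := by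
        rw [Prod.ext_iff]; constructor <;> simp
      rw [this, map_add, map_smul, map_smul, smul_eq_mul, smul_eq_mul]
    have hu0 : u ≤ 0 := by
      have h0 : (0 : ℝ × ℝ) ∈ D := SLemmaAux.zero_mem Mg Mh vg vh cg ch
      simpa using hfD 0 h0
    have hD0 : ∀ d ∈ D, 0 ≤ f d := by
      intro d hd
      by_contra hneg
      push_neg at hneg
      have ht : (0:ℝ) ≤ (u - 1) / f d := by
        rw [div_nonneg_iff]
        exact Or.inr ⟨by linarith, hneg.le⟩
      have hmem := SLemmaAux.cone_mem Mg Mh vg vh cg ch hMg hMh hd ht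
      have := hfD _ hmem
      rw [map_smul, smul_eq_mul, div_mul_cancel₀ _ (ne_of_lt hneg)] at this
      linarith
    have habs : ∀ ε : ℝ, 0 < ε → -p + ε * q < 0 ∧ -(ε * p) + q < 0 := by
      intro ε hε
      constructor
      · have h1 := hfC (-1, ε) ⟨by norm_num, hε⟩
        rw [hf] at h1; linarith
      · have h1 := hfC (-ε, 1) ⟨by simpa using hε, by norm_num⟩
        rw [hf] at h1; linarith
    have hp0 : 0 ≤ p := by
      by_contra hneg
      push_neg at hneg
      have hε : 0 < -p / (2 * (|q| + 1)) := by
        apply div_pos (by linarith) (by positivity)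
      have h1 := (habs _ hε).1
      have h2 : -p / (2 * (|q| + 1)) * q ≥ -(-p / (2 * (|q| + 1)) * |q|) := by
        have := neg_abs_le q
        nlinarith
      have h3 : -p / (2 * (|q| + 1)) * (|q| + 1) = -p / 2 := by
        field_simp
      nlinarith [abs_nonneg q]
    have hq0 : q ≤ 0 := by
      by_contra hneg
      push_neg at hneg
      have hε : 0 < q / (2 * (|p| + 1)) := by
        apply div_pos hneg (by positivity)
      have h1 := (habs _ hε).2
      have h2 : q / (2 * (|p| + 1)) * p ≤ q / (2 * (|p| + 1)) * |p| := by
        have := le_abs_self p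
        nlinarith
      have h3 : q / (2 * (|p| + 1)) * (|p| + 1) = q / 2 := by
        field_simp
      nlinarith [abs_nonneg p]
    have hDpq : ∀ z : V × ℝ,
        0 ≤ p * SLemmaAux.qf Mg vg cg z + q * SLemmaAux.qf Mh vh ch z := by
      intro z
      have := hD0 _ ⟨z, rfl⟩
      rw [hf] at this
      linarith
    have hpne : 0 < p := by
      rcases lt_or_eq_of_le hp0 with h | h
      · exact h
      · exfalso
        have hq' : q < 0 := by
          have := (habs 1 one_pos).1
          rw [← h] at this
          linarith
        have hz := hDpq (x₀, 1)
        rw [hqf1 Mh vh ch, ← h] at hz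
        nlinarith
    refine ⟨-q / p, div_nonneg (neg_nonneg.mpr hq0) hpne.le, ?_⟩
    intro x
    have hz := hDpq (x, 1)
    rw [hqf1 Mg vg cg, hqf1 Mh vh ch] at hz
    have hone : -q / p * (ch + 2 * ⟪vh, x⟫ + ⟪x, Mh x⟫)
        ≤ cg + 2 * ⟪vg, x⟫ + ⟪x, Mg x⟫ := by
      rw [div_mul_eq_mul_div, div_le_iff₀ hpne]
      nlinarith
    linarith
  · rintro ⟨ξ, hξ, hall⟩ x hx
    nlinarith [hall x, mul_nonneg hξ hx]
end

section
/- Let C ⊆ ℝ² satisfy: for all x₁, x₂ ∈ C and every x in the segment [x₁,x₂] with x ≠ 0, the unit vector x/‖x‖ lies in the closure of {y/‖y‖ : y ∈ C \ {0}}. Then C is homogenization-convex: the closure of {τx : τ ≥ 0, x ∈ C} is convex. -/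
/-- If for all `x₁, x₂ ∈ C` every nonzero point of the segment `[x₁, x₂]` projects
spherically into the closure of the spherical projection of `C`, then `C` is
homogenization-convex. -/
theorem homogenizationConvex_of_segment_condition (C : Set (ℝ × ℝ))
    (h : ∀ x₁ ∈ C, ∀ x₂ ∈ C, ∀ x ∈ segment ℝ x₁ x₂, x ≠ 0 →
      ‖x‖⁻¹ • x ∈ closure {z | ∃ y ∈ C \ {(0 : ℝ × ℝ)}, z = ‖y‖⁻¹ • y}) :
    Convex ℝ (closure (homHull C)) := by
  have hsmul : ∀ c : ℝ, 0 ≤ c → ∀ z ∈ closure (homHull C), c • z ∈ closure (homHull C) := by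
    intro c hc z hz
    refine map_mem_closure (continuous_const_smul c) hz ?_
    rintro y ⟨τ, hτ, x, hx, rfl⟩
    exact ⟨c * τ, mul_nonneg hc hτ, x, hx, smul_smul c τ x⟩
  have hPsub : {z | ∃ y ∈ C \ {(0 : ℝ × ℝ)}, z = ‖y‖⁻¹ • y} ⊆ homHull C := by
    rintro z ⟨y, ⟨hy, _⟩, rfl⟩
    exact ⟨‖y‖⁻¹, inv_nonneg.mpr (norm_nonneg y), y, hy, rfl⟩
  have key : ∀ a ∈ homHull C, ∀ b ∈ homHull C, segment ℝ a b ⊆ closure (homHull C) := by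
    rintro a ⟨τ₁, hτ₁, x₁, hx₁, rfl⟩ b ⟨τ₂, hτ₂, x₂, hx₂, rfl⟩ p ⟨s, t, hs, ht, hst, rfl⟩
    set α := s * τ₁ with hαdef
    set β := t * τ₂ with hβdef
    have hα : 0 ≤ α := mul_nonneg hs hτ₁
    have hβ : 0 ≤ β := mul_nonneg ht hτ₂
    have hp : s • τ₁ • x₁ + t • τ₂ • x₂ = α • x₁ + β • x₂ := by
      simp [hαdef, hβdef, smul_smul]
    rw [hp]
    rcases eq_or_lt_of_le (add_nonneg hα hβ) with hγ | hγ
    · have hα0 : α = 0 := by linarith [hβ]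
      have hβ0 : β = 0 := by linarith [hα]
      refine subset_closure ⟨0, le_refl 0, x₁, hx₁, ?_⟩
      simp [hα0, hβ0]
    · set γ := α + β with hγdef
      have hγne : γ ≠ 0 := ne_of_gt hγ
      set x := (α / γ) • x₁ + (β / γ) • x₂ with hxdef
      have hxseg : x ∈ segment ℝ x₁ x₂ := by
        refine ⟨α / γ, β / γ, div_nonneg hα (le_of_lt hγ), div_nonneg hβ (le_of_lt hγ), ?_, rfl⟩
        field_simp
        exact hγdef.symm
      have hgx : γ • x = α • x₁ + β • x₂ := by
        rw [hxdef, smul_add, smul_smul, smul_smul, mul_div_cancel₀ _ hγne,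
          mul_div_cancel₀ _ hγne]
      rw [← hgx]
      rcases eq_or_ne x 0 with hx0 | hx0
      · refine subset_closure ⟨0, le_refl 0, x₁, hx₁, ?_⟩
        simp [hx0]
      · have hmem : ‖x‖⁻¹ • x ∈ closure (homHull C) :=
          closure_mono hPsub (h x₁ hx₁ x₂ hx₂ x hxseg hx0)
        have hnx : ‖x‖ ≠ 0 := norm_ne_zero_iff.mpr hx0
        have : (γ * ‖x‖) • (‖x‖⁻¹ • x) = γ • x := by
          rw [smul_smul, mul_assoc, mul_inv_cancel₀ hnx, mul_one]
        rw [← this]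
        exact hsmul _ (mul_nonneg (le_of_lt hγ) (norm_nonneg x)) _ hmem
  intro a ha b hb s t hs ht hst
  have := map_mem_closure₂ (f := fun x y : ℝ × ℝ => s • x + t • y)
    (by fun_prop) ha hb
    (fun x hx y hy => key x hx y hy ⟨s, t, hs, ht, hst, rfl⟩)
  rwa [closure_closure] at this
end
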